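/- arXiv:1203.0037 — 3 statements merged into one kernel-verified Lean document; each statement's English description precedes it below -/
import Mathlib

section
/- Let A be an associative unital algebra, V a vector space with a distinguished element 1_V, and σ : V ⊗ V → A ⊗ V, R : V ⊗ A → A ⊗ V linear maps satisfying: R(1_V ⊗ a) = a ⊗ 1_V, R(v ⊗ 1_A) = 1_A ⊗ v, σ(1_V, v) = σ(v, 1_V) = 1_A ⊗ v, R∘(id_V ⊗ μ) = (μ ⊗ id_V)∘(id_A ⊗ R)∘(R ⊗ id_A), (μ ⊗ id_V)∘(id_A ⊗ σ)∘(R ⊗ id_V)∘(id_V ⊗ σ) = (μ ⊗ id_V)∘(id_A ⊗ σ)∘(σ ⊗ id_V), and (μ ⊗ id_V)∘(id_A ⊗ σ)∘(R ⊗ id_V)∘(id_V ⊗ R) = (μ ⊗ id_V)∘(id_A ⊗ R)∘(σ ⊗ id_A). Then the multiplication μ_{A⊗V} = (μ₂ ⊗ id_V)∘(id_A ⊗ id_A ⊗ σ)∘(id_A ⊗ R ⊗ id_V) on A ⊗ V, where μ₂ = μ∘(μ ⊗ id_A), is associative with unit 1_A ⊗ 1_V. -/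
open TensorProduct LinearMap Coalgebra

noncomputable section

namespace Paper

universe u

variable (k : Type u) [Field k]

section AlgebraSide

variable (A : Type u) [Ring A] [Algebra k A]
variable (V : Type u) [AddCommGroup V] [Module k V]

/-- `a ⊗ (b ⊗ v) ↦ ab ⊗ v`. -/
def muls2 : A ⊗[k] (A ⊗[k] V) →ₗ[k] A ⊗[k] V :=
  rTensor V (mul' k A) ∘ₗ (TensorProduct.assoc k A A V).symm.toLinearMap

/-- `a ⊗ (b ⊗ (c ⊗ v)) ↦ abc ⊗ v`. -/
def muls3 : A ⊗[k] (A ⊗[k] (A ⊗[k] V)) →ₗ[k] A ⊗[k] V :=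
  muls2 k A V ∘ₗ lTensor A (muls2 k A V)

variable {A V}

/-- The multiplication of the Brzezinski crossed product `A ⊗_{R,σ} V`. -/
def brzMul (R : V ⊗[k] A →ₗ[k] A ⊗[k] V) (σ : V ⊗[k] V →ₗ[k] A ⊗[k] V) :
    (A ⊗[k] V) ⊗[k] (A ⊗[k] V) →ₗ[k] A ⊗[k] V :=
  muls2 k A V ∘ₗ
    lTensor A (muls2 k A V ∘ₗ lTensor A σ ∘ₗ (TensorProduct.assoc k A V V).toLinearMap
      ∘ₗ rTensor V R ∘ₗ (TensorProduct.assoc k V A V).symm.toLinearMap) ∘ₗ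
    (TensorProduct.assoc k A V (A ⊗[k] V)).toLinearMap

/-- The axioms (1.1)--(1.5) of a Brzezinski crossed product. -/
structure IsBrzezinski (e : V) (R : V ⊗[k] A →ₗ[k] A ⊗[k] V)
    (σ : V ⊗[k] V →ₗ[k] A ⊗[k] V) : Prop where
  unit_R_left : ∀ a : A, R (e ⊗ₜ a) = a ⊗ₜ e
  unit_R_right : ∀ v : V, R (v ⊗ₜ (1 : A)) = (1 : A) ⊗ₜ v
  unit_σ_left : ∀ v : V, σ (e ⊗ₜ v) = (1 : A) ⊗ₜ v
  unit_σ_right : ∀ v : V, σ (v ⊗ₜ e) = (1 : A) ⊗ₜ v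
  brz3 : R ∘ₗ lTensor V (mul' k A)
      = rTensor V (mul' k A) ∘ₗ (TensorProduct.assoc k A A V).symm.toLinearMap
        ∘ₗ lTensor A R ∘ₗ (TensorProduct.assoc k A V A).toLinearMap
        ∘ₗ rTensor A R ∘ₗ (TensorProduct.assoc k V A A).symm.toLinearMap
  brz4 : muls2 k A V ∘ₗ lTensor A σ ∘ₗ (TensorProduct.assoc k A V V).toLinearMap
        ∘ₗ rTensor V R ∘ₗ (TensorProduct.assoc k V A V).symm.toLinearMap ∘ₗ lTensor V σ
      = muls2 k A V ∘ₗ lTensor A σ ∘ₗ (TensorProduct.assoc k A V V).toLinearMap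
        ∘ₗ rTensor V σ ∘ₗ (TensorProduct.assoc k V V V).symm.toLinearMap
  brz5 : muls2 k A V ∘ₗ lTensor A σ ∘ₗ (TensorProduct.assoc k A V V).toLinearMap
        ∘ₗ rTensor V R ∘ₗ (TensorProduct.assoc k V A V).symm.toLinearMap ∘ₗ lTensor V R
      = muls2 k A V ∘ₗ lTensor A R ∘ₗ (TensorProduct.assoc k A V A).toLinearMap
        ∘ₗ rTensor A σ ∘ₗ (TensorProduct.assoc k V V A).symm.toLinearMap

/-- The twisted tensor product multiplication on `A ⊗ B`, for a "multiplication"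
`m` on the vector space `B`. -/
def ttMul {B : Type u} [AddCommGroup B] [Module k B]
    (R : B ⊗[k] A →ₗ[k] A ⊗[k] B) (m : B ⊗[k] B →ₗ[k] B) :
    (A ⊗[k] B) ⊗[k] (A ⊗[k] B) →ₗ[k] A ⊗[k] B :=
  muls2 k A B ∘ₗ
    lTensor A (lTensor A m ∘ₗ (TensorProduct.assoc k A B B).toLinearMap
      ∘ₗ rTensor B R ∘ₗ (TensorProduct.assoc k B A B).symm.toLinearMap) ∘ₗ
    (TensorProduct.assoc k A B (A ⊗[k] B)).toLinearMap

/-- The axioms of a twisting map `R : B ⊗ A → A ⊗ B`, where the algebra structure on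
the vector space `B` is given by the multiplication `m` with unit `e`. -/
structure IsTwisting {B : Type u} [AddCommGroup B] [Module k B]
    (R : B ⊗[k] A →ₗ[k] A ⊗[k] B) (m : B ⊗[k] B →ₗ[k] B) (e : B) : Prop where
  unit_left : ∀ a : A, R (e ⊗ₜ a) = a ⊗ₜ e
  unit_right : ∀ b : B, R (b ⊗ₜ (1 : A)) = (1 : A) ⊗ₜ b
  mul_A : R ∘ₗ lTensor B (mul' k A)
      = rTensor B (mul' k A) ∘ₗ (TensorProduct.assoc k A A B).symm.toLinearMap
        ∘ₗ lTensor A R ∘ₗ (TensorProduct.assoc k A B A).toLinearMap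
        ∘ₗ rTensor A R ∘ₗ (TensorProduct.assoc k B A A).symm.toLinearMap
  mul_B : R ∘ₗ rTensor A m
      = lTensor A m ∘ₗ (TensorProduct.assoc k A B B).toLinearMap
        ∘ₗ rTensor B R ∘ₗ (TensorProduct.assoc k B A B).symm.toLinearMap
        ∘ₗ lTensor B R ∘ₗ (TensorProduct.assoc k B B A).toLinearMap

/-- The deformed map `R'` of the invariance under twisting theorem (formula (Rprim)). -/
def Rtw (R : V ⊗[k] A →ₗ[k] A ⊗[k] V) (θ γ : V →ₗ[k] A ⊗[k] V) :
    V ⊗[k] A →ₗ[k] A ⊗[k] V :=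
  muls3 k A V ∘ₗ lTensor A (lTensor A γ) ∘ₗ lTensor A R
    ∘ₗ (TensorProduct.assoc k A V A).toLinearMap ∘ₗ rTensor A θ

/-- The deformed map `σ'` of the invariance under twisting theorem (formula (sigmaprim)). -/
def σtw (R : V ⊗[k] A →ₗ[k] A ⊗[k] V) (σ : V ⊗[k] V →ₗ[k] A ⊗[k] V)
    (θ γ : V →ₗ[k] A ⊗[k] V) : V ⊗[k] V →ₗ[k] A ⊗[k] V :=
  muls2 k A V ∘ₗ lTensor A γ ∘ₗ muls3 k A V ∘ₗ lTensor A (lTensor A σ)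
    ∘ₗ lTensor A ((TensorProduct.assoc k A V V).toLinearMap ∘ₗ rTensor V R
        ∘ₗ (TensorProduct.assoc k V A V).symm.toLinearMap)
    ∘ₗ (TensorProduct.assoc k A V (A ⊗[k] V)).toLinearMap ∘ₗ TensorProduct.map θ θ

/-- Condition (cros4), relative to a map `σ'`. -/
def Cros4 (R : V ⊗[k] A →ₗ[k] A ⊗[k] V) (σ : V ⊗[k] V →ₗ[k] A ⊗[k] V)
    (γ : V →ₗ[k] A ⊗[k] V) (σ' : V ⊗[k] V →ₗ[k] A ⊗[k] V) : Prop :=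
  muls2 k A V ∘ₗ TensorProduct.map (mul' k A) σ'
      ∘ₗ (TensorProduct.assoc k (A ⊗[k] A) V V).toLinearMap
      ∘ₗ rTensor V (TensorProduct.assoc k A A V).symm.toLinearMap
      ∘ₗ rTensor V (lTensor A γ) ∘ₗ rTensor V R
      ∘ₗ (TensorProduct.assoc k V A V).symm.toLinearMap ∘ₗ lTensor V γ
    = muls2 k A V ∘ₗ lTensor A γ ∘ₗ σ

/-- Conditions (cros1)--(cros3) on the pair `(θ, γ)`. -/
def Cros123 (e : V) (θ γ : V →ₗ[k] A ⊗[k] V) : Prop :=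
  θ e = (1 : A) ⊗ₜ e ∧ γ e = (1 : A) ⊗ₜ e ∧
  muls2 k A V ∘ₗ lTensor A γ ∘ₗ θ = TensorProduct.mk k A V 1 ∧
  muls2 k A V ∘ₗ lTensor A θ ∘ₗ γ = TensorProduct.mk k A V 1

/-- The map `φ(a ⊗ v) = a v_{<-1>} ⊗ v_{<0>}`. -/
def φtw (θ : V →ₗ[k] A ⊗[k] V) : A ⊗[k] V →ₗ[k] A ⊗[k] V :=
  muls2 k A V ∘ₗ lTensor A θ

end AlgebraSide

section CoalgebraSide

variable (C : Type u) [AddCommGroup C] [Module k C] [Coalgebra k C]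
variable (X : Type u) [AddCommGroup X] [Module k X]

variable {C X}

/-- The comultiplication of the crossed coproduct `X_{W,ρ} ⊗ C`. -/
def coDelta (W : X ⊗[k] C →ₗ[k] C ⊗[k] X) (ρ : X ⊗[k] C →ₗ[k] X ⊗[k] X) :
    X ⊗[k] C →ₗ[k] (X ⊗[k] C) ⊗[k] (X ⊗[k] C) :=
  (TensorProduct.assoc k X C (X ⊗[k] C)).symm.toLinearMap ∘ₗ
  lTensor X (TensorProduct.assoc k C X C).toLinearMap ∘ₗ
  lTensor X (rTensor C W) ∘ₗ
  lTensor X (TensorProduct.assoc k X C C).symm.toLinearMap ∘ₗ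
  (TensorProduct.assoc k X X (C ⊗[k] C)).toLinearMap ∘ₗ
  TensorProduct.map ρ comul ∘ₗ
  (TensorProduct.assoc k X C C).symm.toLinearMap ∘ₗ
  lTensor X comul

/-- The counit `ε_X ⊗ ε_C` of the crossed coproduct. -/
def coEps (εX : X →ₗ[k] k) : X ⊗[k] C →ₗ[k] k :=
  (TensorProduct.lid k k).toLinearMap ∘ₗ TensorProduct.map εX counit

/-- The axioms (cobrz1)--(cobrz5) of a crossed coproduct. -/
structure IsCoBrzezinski (εX : X →ₗ[k] k) (W : X ⊗[k] C →ₗ[k] C ⊗[k] X)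
    (ρ : X ⊗[k] C →ₗ[k] X ⊗[k] X) : Prop where
  counit_W_left : (TensorProduct.rid k C).toLinearMap ∘ₗ lTensor C εX ∘ₗ W
      = (TensorProduct.lid k C).toLinearMap ∘ₗ rTensor C εX
  counit_W_right : (TensorProduct.lid k X).toLinearMap ∘ₗ rTensor X counit ∘ₗ W
      = (TensorProduct.rid k X).toLinearMap ∘ₗ lTensor X counit
  counit_ρ_left : (TensorProduct.rid k X).toLinearMap ∘ₗ lTensor X εX ∘ₗ ρ
      = (TensorProduct.rid k X).toLinearMap ∘ₗ lTensor X counit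
  counit_ρ_right : (TensorProduct.lid k X).toLinearMap ∘ₗ rTensor X εX ∘ₗ ρ
      = (TensorProduct.rid k X).toLinearMap ∘ₗ lTensor X counit
  cobrz3 : rTensor X comul ∘ₗ W
      = (TensorProduct.assoc k C C X).symm.toLinearMap ∘ₗ lTensor C W
        ∘ₗ (TensorProduct.assoc k C X C).toLinearMap ∘ₗ rTensor C W
        ∘ₗ (TensorProduct.assoc k X C C).symm.toLinearMap ∘ₗ lTensor X comul
  cobrz4 : rTensor X ρ ∘ₗ (TensorProduct.assoc k X C X).symm.toLinearMap
        ∘ₗ lTensor X W ∘ₗ (TensorProduct.assoc k X X C).toLinearMap ∘ₗ rTensor C ρ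
        ∘ₗ (TensorProduct.assoc k X C C).symm.toLinearMap ∘ₗ lTensor X comul
      = (TensorProduct.assoc k X X X).symm.toLinearMap ∘ₗ lTensor X ρ
        ∘ₗ (TensorProduct.assoc k X X C).toLinearMap ∘ₗ rTensor C ρ
        ∘ₗ (TensorProduct.assoc k X C C).symm.toLinearMap ∘ₗ lTensor X comul
  cobrz5 : rTensor X W ∘ₗ (TensorProduct.assoc k X C X).symm.toLinearMap
        ∘ₗ lTensor X W ∘ₗ (TensorProduct.assoc k X X C).toLinearMap ∘ₗ rTensor C ρ
        ∘ₗ (TensorProduct.assoc k X C C).symm.toLinearMap ∘ₗ lTensor X comul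
      = (TensorProduct.assoc k C X X).symm.toLinearMap ∘ₗ lTensor C ρ
        ∘ₗ (TensorProduct.assoc k C X C).toLinearMap ∘ₗ rTensor C W
        ∘ₗ (TensorProduct.assoc k X C C).symm.toLinearMap ∘ₗ lTensor X comul

end CoalgebraSide

section BialgebraSide

variable (A : Type u) [Ring A] [Bialgebra k A]
variable (C : Type u) [AddCommGroup C] [Module k C] [Coalgebra k C]

/-- `W₀ : A ⊗ C → C ⊗ A`, the flip. -/
def W0 : A ⊗[k] C →ₗ[k] C ⊗[k] A := (TensorProduct.comm k A C).toLinearMap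

/-- `g₀ : A ⊗ C → A`, `a ⊗ c ↦ ε_C(c) a`. -/
def g0 : A ⊗[k] C →ₗ[k] A :=
  (TensorProduct.rid k A).toLinearMap ∘ₗ lTensor A counit

/-- `ρ₀ : A ⊗ C → A ⊗ A`, `a ⊗ c ↦ ε_C(c) Δ_A(a)`. -/
def ρ0 : A ⊗[k] C →ₗ[k] A ⊗[k] A := comul ∘ₗ g0 k A C

variable {A C}

/-- The property that a comultiplication `Δ` on `Y` is a morphism of algebras, where the
multiplication on `Y` is `m` and the one on `Y ⊗ Y` is componentwise (with the middle flip). -/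
def DeltaIsMulMap {Y : Type u} [AddCommGroup Y] [Module k Y]
    (m : Y ⊗[k] Y →ₗ[k] Y) (Δ : Y →ₗ[k] Y ⊗[k] Y) : Prop :=
  Δ ∘ₗ m = TensorProduct.map m m ∘ₗ (tensorTensorTensorComm k Y Y Y Y).toLinearMap
    ∘ₗ TensorProduct.map Δ Δ

/-- The property that a counit `ε` on `Y` is a morphism of algebras. -/
def EpsIsMulMap {Y : Type u} [AddCommGroup Y] [Module k Y]
    (m : Y ⊗[k] Y →ₗ[k] Y) (ε : Y →ₗ[k] k) : Prop :=
  ε ∘ₗ m = mul' k k ∘ₗ TensorProduct.map ε ε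

/-- `A_{W₀}^{ρ₀} ⋈_R^σ C` is a cross product bialgebra: the crossed product algebra
`A ⊗_{R,σ} C` together with the tensor product coalgebra structure on `A ⊗ C`
form a bialgebra. -/
structure IsCrossBialgebra0 (eC : C) (R : C ⊗[k] A →ₗ[k] A ⊗[k] C)
    (σ : C ⊗[k] C →ₗ[k] A ⊗[k] C) : Prop where
  brz : IsBrzezinski k eC R σ
  delta_mul : DeltaIsMulMap k (brzMul k R σ) (Coalgebra.comul (R := k) (A := A ⊗[k] C))
  delta_one : Coalgebra.comul (R := k) (A := A ⊗[k] C) ((1 : A) ⊗ₜ eC)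
      = ((1 : A) ⊗ₜ eC) ⊗ₜ[k] ((1 : A) ⊗ₜ eC)
  eps_mul : EpsIsMulMap k (brzMul k R σ) (Coalgebra.counit (R := k) (A := A ⊗[k] C))
  eps_one : Coalgebra.counit (R := k) (A := A ⊗[k] C) ((1 : A) ⊗ₜ eC) = 1

/-- `A_{W}^{ρ} ⋈_R^σ C` is a cross product bialgebra: the crossed product algebra
`A ⊗_{R,σ} C` together with the crossed coproduct coalgebra `A_{W,ρ} ⊗ C`
form a bialgebra. -/
structure IsCrossBialgebra (eC : C) (R : C ⊗[k] A →ₗ[k] A ⊗[k] C)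
    (σ : C ⊗[k] C →ₗ[k] A ⊗[k] C) (W : A ⊗[k] C →ₗ[k] C ⊗[k] A)
    (ρ : A ⊗[k] C →ₗ[k] A ⊗[k] A) : Prop where
  brz : IsBrzezinski k eC R σ
  cobrz : IsCoBrzezinski k (Coalgebra.counit (R := k) (A := A)) W ρ
  delta_mul : DeltaIsMulMap k (brzMul k R σ) (coDelta k W ρ)
  delta_one : coDelta k W ρ ((1 : A) ⊗ₜ eC) = ((1 : A) ⊗ₜ eC) ⊗ₜ[k] ((1 : A) ⊗ₜ eC)
  eps_mul : EpsIsMulMap k (brzMul k R σ) (coEps k (Coalgebra.counit (R := k) (A := A)))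
  eps_one : coEps k (Coalgebra.counit (R := k) (A := A)) ((1 : A) ⊗ₜ eC) = 1

/-- The right `C`-coaction `a ⊗ c ↦ (a ⊗ c₁) ⊗ c₂` on `A ⊗ C`. -/
def coactC : A ⊗[k] C →ₗ[k] (A ⊗[k] C) ⊗[k] C :=
  (TensorProduct.assoc k A C C).symm.toLinearMap ∘ₗ lTensor A comul

/-- The counit condition (extra1) for a map `θ : C → A ⊗ C`. -/
def CounitCond (θ : C →ₗ[k] A ⊗[k] C) : Prop :=
  (TensorProduct.lid k k).toLinearMap
      ∘ₗ TensorProduct.map (Coalgebra.counit (R := k) (A := A)) counit ∘ₗ θ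
    = (counit : C →ₗ[k] k)

/-- The right `C`-comodule condition (extra2)/(extra3) for a map `θ : C → A ⊗ C`. -/
def ComodCond (θ : C →ₗ[k] A ⊗[k] C) : Prop :=
  lTensor A comul ∘ₗ θ
    = (TensorProduct.assoc k A C C).toLinearMap ∘ₗ rTensor C θ ∘ₗ comul

/-- The map `c ↦ ε_A(c_{<-1>}) c_{<0>}`. -/
def epsFirst (θ : C →ₗ[k] A ⊗[k] C) : C →ₗ[k] C :=
  (TensorProduct.lid k C).toLinearMap
    ∘ₗ rTensor C (Coalgebra.counit (R := k) (A := A)) ∘ₗ θ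

/-- The map `W'` built from `(θ, γ)`; `h` is applied to the first output factor
(`h = id` for formula (Wprimnou), `h = epsFirst γ` for formula (Wprim)). -/
def Wtw (θ γ : C →ₗ[k] A ⊗[k] C) (h : C →ₗ[k] C) : A ⊗[k] C →ₗ[k] C ⊗[k] A :=
  lTensor C (mul' k A) ∘ₗ (TensorProduct.assoc k C A A).toLinearMap
    ∘ₗ rTensor A (TensorProduct.comm k A C).toLinearMap
    ∘ₗ (TensorProduct.assoc k A C A).symm.toLinearMap
    ∘ₗ rTensor (C ⊗[k] A) (mul' k A)
    ∘ₗ (TensorProduct.assoc k A A (C ⊗[k] A)).symm.toLinearMap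
    ∘ₗ lTensor A (lTensor A (TensorProduct.map h (g0 k A C ∘ₗ γ) ∘ₗ comul) ∘ₗ θ)

/-- Componentwise multiplication `(A ⊗ A) ⊗ (A ⊗ A) → A ⊗ A` (with the middle flip). -/
def mulPair : (A ⊗[k] A) ⊗[k] (A ⊗[k] A) →ₗ[k] A ⊗[k] A :=
  TensorProduct.map (mul' k A) (mul' k A) ∘ₗ (tensorTensorTensorComm k A A A A).toLinearMap

/-- The map `c ↦ c_{{-1}} ⊗ ε_C(c_{{0}}_{{0}}) c_{{0}}_{{-1}}`. -/
def lamAux (γ : C →ₗ[k] A ⊗[k] C) : C →ₗ[k] A ⊗[k] A :=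
  lTensor A (g0 k A C ∘ₗ γ) ∘ₗ γ

/-- The map `κ` appearing in the formula (rhoprim). -/
def kapAux (θ γ : C →ₗ[k] A ⊗[k] C) : C →ₗ[k] A ⊗[k] A :=
  mulPair k ∘ₗ TensorProduct.map comul (lamAux k γ) ∘ₗ θ

/-- The map `ρ'` of formula (rhoprim). -/
def ρtw (θ γ : C →ₗ[k] A ⊗[k] C) : A ⊗[k] C →ₗ[k] A ⊗[k] A :=
  mulPair k ∘ₗ TensorProduct.map comul (kapAux k θ γ)

/-- Auxiliary map for the explicit formula (deltaprim). -/
def eAux (θ γ : C →ₗ[k] A ⊗[k] C) : C →ₗ[k] (A ⊗[k] C) ⊗[k] A :=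
  (TensorProduct.assoc k A C A).symm.toLinearMap
    ∘ₗ lTensor A (TensorProduct.comm k A C).toLinearMap
    ∘ₗ TensorProduct.map (mul' k A) LinearMap.id
    ∘ₗ (tensorTensorTensorComm k A A A C).toLinearMap
    ∘ₗ TensorProduct.map comul γ ∘ₗ θ

/-- Auxiliary map for the explicit formula (deltaprim). -/
def dAux (θ γ : C →ₗ[k] A ⊗[k] C) : C →ₗ[k] (A ⊗[k] C) ⊗[k] (A ⊗[k] C) :=
  lTensor (A ⊗[k] C) (muls2 k A C)
    ∘ₗ (TensorProduct.assoc k (A ⊗[k] C) A (A ⊗[k] C)).toLinearMap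
    ∘ₗ TensorProduct.map (eAux k θ γ) γ ∘ₗ comul

/-- The explicit formula (deltaprim) for the comultiplication `Δ'`. -/
def deltaExplicit (θ γ : C →ₗ[k] A ⊗[k] C) :
    A ⊗[k] C →ₗ[k] (A ⊗[k] C) ⊗[k] (A ⊗[k] C) :=
  TensorProduct.map (muls2 k A C) (muls2 k A C)
    ∘ₗ (tensorTensorTensorComm k A A (A ⊗[k] C) (A ⊗[k] C)).toLinearMap
    ∘ₗ TensorProduct.map comul (dAux k θ γ)

/-- The conditions (cros1)--(cros4) and (extra1)--(extra3) on `(θ, γ)`. -/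
def TwistConditions (eC : C) (R : C ⊗[k] A →ₗ[k] A ⊗[k] C)
    (σ : C ⊗[k] C →ₗ[k] A ⊗[k] C) (θ γ : C →ₗ[k] A ⊗[k] C) : Prop :=
  Cros123 k eC θ γ ∧ Cros4 k R σ γ (σtw k R σ θ γ) ∧
  CounitCond k θ ∧ CounitCond k γ ∧ ComodCond k θ ∧ ComodCond k γ

/-- Equivalence of cross product bialgebras: a linear isomorphism which is a morphism of
bialgebras, of left `A`-modules and of right `C`-comodules; the target is the cross product
bialgebra `A_{W₀}^{ρ₀} ⋈_R^σ C` (with tensor product coalgebra structure), the source is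
`A_{W'}^{ρ'} ⋈_{R'}^{σ'} C`. -/
def CrossEquiv (eC : C) (R : C ⊗[k] A →ₗ[k] A ⊗[k] C) (σ : C ⊗[k] C →ₗ[k] A ⊗[k] C)
    (R' : C ⊗[k] A →ₗ[k] A ⊗[k] C) (σ' : C ⊗[k] C →ₗ[k] A ⊗[k] C)
    (W' : A ⊗[k] C →ₗ[k] C ⊗[k] A) (ρ' : A ⊗[k] C →ₗ[k] A ⊗[k] A) : Prop :=
  ∃ φ : (A ⊗[k] C) ≃ₗ[k] A ⊗[k] C,
    (∀ x y : A ⊗[k] C, φ (brzMul k R' σ' (x ⊗ₜ y)) = brzMul k R σ (φ x ⊗ₜ φ y)) ∧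
    φ ((1 : A) ⊗ₜ eC) = (1 : A) ⊗ₜ eC ∧
    TensorProduct.map φ.toLinearMap φ.toLinearMap ∘ₗ coDelta k W' ρ'
      = Coalgebra.comul (R := k) (A := A ⊗[k] C) ∘ₗ φ.toLinearMap ∧
    Coalgebra.counit (R := k) (A := A ⊗[k] C) ∘ₗ φ.toLinearMap
      = coEps k (Coalgebra.counit (R := k) (A := A)) ∧
    (∀ (a : A) (x : A ⊗[k] C), φ (muls2 k A C (a ⊗ₜ x)) = muls2 k A C (a ⊗ₜ φ x)) ∧
    rTensor C φ.toLinearMap ∘ₗ coactC k = coactC k ∘ₗ φ.toLinearMap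

end BialgebraSide


section Drinfeld

variable (H : Type u) [Ring H] [HopfAlgebra k H]

/-- Convolution product on `H* = Dual k H`: `(p * q)(h) = p(h₁) q(h₂)`. -/
def conv : Module.Dual k H ⊗[k] Module.Dual k H →ₗ[k] Module.Dual k H :=
  (Coalgebra.comul (R := k) (A := H)).dualMap ∘ₗ TensorProduct.dualDistrib k H H

/-- The left regular action `h ⊗ p ↦ h ⇀ p`, `(h ⇀ p)(h') = p(h'h)`. -/
def lact : H ⊗[k] Module.Dual k H →ₗ[k] Module.Dual k H :=
  TensorProduct.lift ((lcomp k (Module.Dual k H) ((LinearMap.mul k H).flip)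
    ∘ₗ llcomp k H H k).flip)

/-- The right regular action `p ⊗ h ↦ p ↼ h`, `(p ↼ h)(h') = p(hh')`. -/
def ract : Module.Dual k H ⊗[k] H →ₗ[k] Module.Dual k H :=
  TensorProduct.lift (lcomp k (Module.Dual k H) (LinearMap.mul k H)
    ∘ₗ llcomp k H H k)

/-- The map `h ⊗ p ↦ (h₁ ⇀ p ↼ S⁻¹(h₃)) ⊗ h₂`, where `Sinv` plays the role of `S⁻¹`. -/
def dPhi (Sinv : H →ₗ[k] H) :
    H ⊗[k] Module.Dual k H →ₗ[k] Module.Dual k H ⊗[k] H :=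
  rTensor H (lact k H)
    ∘ₗ (TensorProduct.assoc k H (Module.Dual k H) H).symm.toLinearMap
    ∘ₗ lTensor H (TensorProduct.comm k H (Module.Dual k H)).toLinearMap
    ∘ₗ lTensor H (lTensor H (ract k H
        ∘ₗ (TensorProduct.comm k H (Module.Dual k H)).toLinearMap
        ∘ₗ rTensor (Module.Dual k H) Sinv))
    ∘ₗ lTensor H (TensorProduct.assoc k H H (Module.Dual k H)).toLinearMap
    ∘ₗ (TensorProduct.assoc k H (H ⊗[k] H) (Module.Dual k H)).toLinearMap
    ∘ₗ rTensor (Module.Dual k H) (lTensor H comul ∘ₗ comul)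

/-- The multiplication of the Drinfeld double:
`(p ⊗ h)(p' ⊗ h') = p (h₁ ⇀ p' ↼ S⁻¹(h₃)) ⊗ h₂ h'`. -/
def dMul (Sinv : H →ₗ[k] H) :
    (Module.Dual k H ⊗[k] H) ⊗[k] (Module.Dual k H ⊗[k] H) →ₗ[k]
      Module.Dual k H ⊗[k] H :=
  rTensor H (conv k H)
    ∘ₗ (TensorProduct.assoc k (Module.Dual k H) (Module.Dual k H) H).symm.toLinearMap
    ∘ₗ lTensor (Module.Dual k H)
        (lTensor (Module.Dual k H) (mul' k H)
          ∘ₗ (TensorProduct.assoc k (Module.Dual k H) H H).toLinearMap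
          ∘ₗ rTensor H (dPhi k H Sinv)
          ∘ₗ (TensorProduct.assoc k H (Module.Dual k H) H).symm.toLinearMap)
    ∘ₗ (TensorProduct.assoc k (Module.Dual k H) H
          (Module.Dual k H ⊗[k] H)).toLinearMap

/-- The comultiplication of `H*`, dual to the multiplication of `H` (finite dimensional). -/
def comulD [FiniteDimensional k H] :
    Module.Dual k H →ₗ[k] Module.Dual k H ⊗[k] Module.Dual k H :=
  (TensorProduct.dualDistribEquiv k H H).symm.toLinearMap ∘ₗ (mul' k H).dualMap

/-- The comultiplication of `H^{*cop}`. -/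
def comulDcop [FiniteDimensional k H] :
    Module.Dual k H →ₗ[k] Module.Dual k H ⊗[k] Module.Dual k H :=
  (TensorProduct.comm k (Module.Dual k H) (Module.Dual k H)).toLinearMap ∘ₗ comulD k H

/-- The counit of `H*`: evaluation at `1`. -/
def counitD : Module.Dual k H →ₗ[k] k := Module.Dual.eval k H 1

/-- The comultiplication of the tensor product coalgebra `H^{*cop} ⊗ H`. -/
def deltaD [FiniteDimensional k H] :
    Module.Dual k H ⊗[k] H →ₗ[k]
      (Module.Dual k H ⊗[k] H) ⊗[k] (Module.Dual k H ⊗[k] H) :=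
  (tensorTensorTensorComm k (Module.Dual k H) (Module.Dual k H) H H).toLinearMap
    ∘ₗ TensorProduct.map (comulDcop k H) comul

/-- The counit of the tensor product coalgebra `H^{*cop} ⊗ H`. -/
def epsD : Module.Dual k H ⊗[k] H →ₗ[k] k :=
  (TensorProduct.lid k k).toLinearMap
    ∘ₗ TensorProduct.map (counitD k H) (Coalgebra.counit (R := k) (A := H))

/-- The left `H^{*cop}`-coaction on `H^{*cop} ⊗ H`: `p ⊗ h ↦ p₂ ⊗ (p₁ ⊗ h)`. -/
def coactD [FiniteDimensional k H] :
    Module.Dual k H ⊗[k] H →ₗ[k]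
      Module.Dual k H ⊗[k] (Module.Dual k H ⊗[k] H) :=
  (TensorProduct.assoc k (Module.Dual k H) (Module.Dual k H) H).toLinearMap
    ∘ₗ rTensor H (comulDcop k H)

/-- `r₁₂ ∈ H ⊗ (H ⊗ H)` for `r ∈ H ⊗ H`. -/
def r12 (r : H ⊗[k] H) : H ⊗[k] (H ⊗[k] H) :=
  lTensor H ((TensorProduct.mk k H H).flip 1) r

/-- `r₁₃ ∈ H ⊗ (H ⊗ H)` for `r ∈ H ⊗ H`. -/
def r13 (r : H ⊗[k] H) : H ⊗[k] (H ⊗[k] H) :=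
  lTensor H (TensorProduct.mk k H H 1) r

/-- `r₂₃ ∈ H ⊗ (H ⊗ H)` for `r ∈ H ⊗ H`. -/
def r23 (r : H ⊗[k] H) : H ⊗[k] (H ⊗[k] H) := (1 : H) ⊗ₜ r

/-- `r` is a quasitriangular structure on `H`. -/
structure IsQuasitriangular (r : H ⊗[k] H) : Prop where
  qt1 : (TensorProduct.assoc k H H H) (rTensor H comul r) = r13 k H r * r23 k H r
  qt2 : lTensor H comul r = r13 k H r * r12 k H r
  qt3 : ∀ h : H, (TensorProduct.comm k H H) (comul h) * r = r * comul h
  qt4l : (TensorProduct.lid k H)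
      (rTensor H (Coalgebra.counit (R := k) (A := H)) r) = 1
  qt4r : (TensorProduct.rid k H)
      (lTensor H (Coalgebra.counit (R := k) (A := H)) r) = 1

/-- Majid's map `φ(p ⊗ h) = (p ↼ S⁻¹(r¹)) ⊗ r² h`. -/
def phiMajid (r : H ⊗[k] H) (Sinv : H →ₗ[k] H) :
    Module.Dual k H ⊗[k] H →ₗ[k] Module.Dual k H ⊗[k] H :=
  TensorProduct.map (ract k H ∘ₗ lTensor (Module.Dual k H) Sinv)
      (mul' k H ∘ₗ (TensorProduct.comm k H H).toLinearMap)
    ∘ₗ (tensorTensorTensorComm k (Module.Dual k H) H H H).toLinearMap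
    ∘ₗ (TensorProduct.mk k (Module.Dual k H ⊗[k] H) (H ⊗[k] H)).flip r

end Drinfeld

end Paper

universe u
open Paper


namespace BrzAux

open TensorProduct LinearMap Paper

universe v
variable {k A V : Type v} [Field k] [Ring A] [Algebra k A]
  [AddCommGroup V] [Module k V]
variable (R : V ⊗[k] A →ₗ[k] A ⊗[k] V) (σ : V ⊗[k] V →ₗ[k] A ⊗[k] V)

/-- `y ⊗ w ↦ (id ⊗ σ) usage`: `(p ⊗ q) ⊗ w ↦ p · σ(q ⊗ w)`. -/
def Gm : (A ⊗[k] V) ⊗[k] V →ₗ[k] A ⊗[k] V :=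
  muls2 k A V ∘ₗ lTensor A σ ∘ₗ (TensorProduct.assoc k A V V).toLinearMap

def Grm : (A ⊗[k] V) ⊗[k] A →ₗ[k] A ⊗[k] V :=
  muls2 k A V ∘ₗ lTensor A R ∘ₗ (TensorProduct.assoc k A V A).toLinearMap

def Sm : V ⊗[k] (A ⊗[k] V) →ₗ[k] A ⊗[k] V :=
  Gm σ ∘ₗ rTensor V R ∘ₗ (TensorProduct.assoc k V A V).symm.toLinearMap

lemma muls2_tmul (a b : A) (v : V) :
    muls2 k A V (a ⊗ₜ[k] (b ⊗ₜ[k] v)) = (a * b) ⊗ₜ[k] v := by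
  simp [muls2]

lemma Gm_tmul (p : A) (q w : V) :
    Gm σ ((p ⊗ₜ[k] q) ⊗ₜ[k] w) = muls2 k A V (p ⊗ₜ[k] σ (q ⊗ₜ[k] w)) := by
  simp [Gm]

lemma Grm_tmul (p : A) (q : V) (a : A) :
    Grm R ((p ⊗ₜ[k] q) ⊗ₜ[k] a) = muls2 k A V (p ⊗ₜ[k] R (q ⊗ₜ[k] a)) := by
  simp [Grm]

lemma Sm_tmul (v : V) (b : A) (w : V) :
    Sm R σ (v ⊗ₜ[k] (b ⊗ₜ[k] w)) = Gm σ (R (v ⊗ₜ[k] b) ⊗ₜ[k] w) := by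
  simp [Sm]

lemma brzMul_tmul (a : A) (v : V) (x : A ⊗[k] V) :
    brzMul k R σ ((a ⊗ₜ[k] v) ⊗ₜ[k] x) = muls2 k A V (a ⊗ₜ[k] Sm R σ (v ⊗ₜ[k] x)) := by
  simp [brzMul, Sm, Gm]

lemma muls2_muls2 (a b : A) (x : A ⊗[k] V) :
    muls2 k A V (a ⊗ₜ[k] muls2 k A V (b ⊗ₜ[k] x)) = muls2 k A V ((a * b) ⊗ₜ[k] x) := by
  induction x using TensorProduct.induction_on with
  | zero => simp
  | tmul c u => simp [muls2_tmul, mul_assoc]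
  | add x₁ x₂ h₁ h₂ => simp [tmul_add, h₁, h₂]

lemma Gm_muls2 (p : A) (m : A ⊗[k] V) (u : V) :
    Gm σ (muls2 k A V (p ⊗ₜ[k] m) ⊗ₜ[k] u) = muls2 k A V (p ⊗ₜ[k] Gm σ (m ⊗ₜ[k] u)) := by
  induction m using TensorProduct.induction_on with
  | zero => simp
  | tmul s t => simp [muls2_tmul, Gm_tmul, muls2_muls2]
  | add m₁ m₂ h₁ h₂ => simp [tmul_add, add_tmul, h₁, h₂]

lemma Grm_muls2 (p : A) (m : A ⊗[k] V) (a : A) :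
    Grm R (muls2 k A V (p ⊗ₜ[k] m) ⊗ₜ[k] a) = muls2 k A V (p ⊗ₜ[k] Grm R (m ⊗ₜ[k] a)) := by
  induction m using TensorProduct.induction_on with
  | zero => simp
  | tmul s t => simp [muls2_tmul, Grm_tmul, muls2_muls2]
  | add m₁ m₂ h₁ h₂ => simp [tmul_add, add_tmul, h₁, h₂]

lemma brzMul_muls2 (a : A) (y x : A ⊗[k] V) :
    brzMul k R σ (muls2 k A V (a ⊗ₜ[k] y) ⊗ₜ[k] x)
      = muls2 k A V (a ⊗ₜ[k] brzMul k R σ (y ⊗ₜ[k] x)) := by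
  induction y using TensorProduct.induction_on with
  | zero => simp
  | tmul b w => simp [muls2_tmul, brzMul_tmul, muls2_muls2]
  | add y₁ y₂ h₁ h₂ => simp [tmul_add, add_tmul, h₁, h₂]

variable {e : V}

lemma ax3 (h : IsBrzezinski k e R σ) (v : V) (a b : A) :
    R (v ⊗ₜ[k] (a * b)) = Grm R (R (v ⊗ₜ[k] a) ⊗ₜ[k] b) := by
  have := LinearMap.congr_fun h.brz3 (v ⊗ₜ[k] (a ⊗ₜ[k] b))
  simpa [Grm, muls2] using this

lemma ax4 (h : IsBrzezinski k e R σ) (v w u : V) :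
    Sm R σ (v ⊗ₜ[k] σ (w ⊗ₜ[k] u)) = Gm σ (σ (v ⊗ₜ[k] w) ⊗ₜ[k] u) := by
  have := LinearMap.congr_fun h.brz4 (v ⊗ₜ[k] (w ⊗ₜ[k] u))
  simpa [Sm, Gm] using this

lemma ax5 (h : IsBrzezinski k e R σ) (v w : V) (a : A) :
    Sm R σ (v ⊗ₜ[k] R (w ⊗ₜ[k] a)) = Grm R (σ (v ⊗ₜ[k] w) ⊗ₜ[k] a) := by
  have := LinearMap.congr_fun h.brz5 (v ⊗ₜ[k] (w ⊗ₜ[k] a))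
  simpa [Sm, Gm, Grm] using this

lemma Gm_Grm (c : A) (u : V) (y : A ⊗[k] V) :
    Gm σ (Grm R (y ⊗ₜ[k] c) ⊗ₜ[k] u) = brzMul k R σ (y ⊗ₜ[k] (c ⊗ₜ[k] u)) := by
  induction y using TensorProduct.induction_on with
  | zero => simp
  | tmul p q => rw [Grm_tmul, Gm_muls2, ← Sm_tmul, ← brzMul_tmul]
  | add y₁ y₂ h₁ h₂ => simp [add_tmul, h₁, h₂]

lemma Sm_muls2 (h : IsBrzezinski k e R σ) (v : V) (a : A) (z : A ⊗[k] V) :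
    Sm R σ (v ⊗ₜ[k] muls2 k A V (a ⊗ₜ[k] z)) = brzMul k R σ (R (v ⊗ₜ[k] a) ⊗ₜ[k] z) := by
  induction z using TensorProduct.induction_on with
  | zero => simp
  | tmul c u => rw [muls2_tmul, Sm_tmul, ax3 R σ h, Gm_Grm]
  | add z₁ z₂ h₁ h₂ => simp [tmul_add, h₁, h₂]

lemma Gm_Gm (h : IsBrzezinski k e R σ) (t u : V) (z : A ⊗[k] V) :
    Gm σ (Gm σ (z ⊗ₜ[k] t) ⊗ₜ[k] u) = brzMul k R σ (z ⊗ₜ[k] σ (t ⊗ₜ[k] u)) := by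
  induction z using TensorProduct.induction_on with
  | zero => simp
  | tmul p m => rw [Gm_tmul, Gm_muls2, ← ax4 R σ h, ← brzMul_tmul]
  | add z₁ z₂ h₁ h₂ => simp [add_tmul, h₁, h₂]

lemma Grm_Gm (h : IsBrzezinski k e R σ) (t : V) (a : A) (z : A ⊗[k] V) :
    Grm R (Gm σ (z ⊗ₜ[k] t) ⊗ₜ[k] a) = brzMul k R σ (z ⊗ₜ[k] R (t ⊗ₜ[k] a)) := by
  induction z using TensorProduct.induction_on with
  | zero => simp
  | tmul p m => rw [Gm_tmul, Grm_muls2, ← ax5 R σ h, ← brzMul_tmul]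
  | add z₁ z₂ h₁ h₂ => simp [add_tmul, h₁, h₂]

lemma Sm_Gm (h : IsBrzezinski k e R σ) (q u : V) (y : A ⊗[k] V) :
    Sm R σ (q ⊗ₜ[k] Gm σ (y ⊗ₜ[k] u)) = Gm σ (Sm R σ (q ⊗ₜ[k] y) ⊗ₜ[k] u) := by
  induction y using TensorProduct.induction_on with
  | zero => simp
  | tmul s t => rw [Gm_tmul, Sm_muls2 R σ h, ← Gm_Gm R σ h, ← Sm_tmul]
  | add y₁ y₂ h₁ h₂ => simp [tmul_add, add_tmul, h₁, h₂]

lemma brzMul_sigma (h : IsBrzezinski k e R σ) (q w : V) (x : A ⊗[k] V) :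
    brzMul k R σ (σ (q ⊗ₜ[k] w) ⊗ₜ[k] x) = Sm R σ (q ⊗ₜ[k] Sm R σ (w ⊗ₜ[k] x)) := by
  induction x using TensorProduct.induction_on with
  | zero => simp
  | tmul c u => rw [Sm_tmul, Sm_Gm R σ h, ax5 R σ h, Gm_Grm]
  | add x₁ x₂ h₁ h₂ => simp [tmul_add, h₁, h₂]

lemma brzMul_Gm (h : IsBrzezinski k e R σ) (w : V) (y x : A ⊗[k] V) :
    brzMul k R σ (Gm σ (y ⊗ₜ[k] w) ⊗ₜ[k] x) = brzMul k R σ (y ⊗ₜ[k] Sm R σ (w ⊗ₜ[k] x)) := by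
  induction y using TensorProduct.induction_on with
  | zero => simp
  | tmul p q => rw [Gm_tmul, brzMul_muls2, brzMul_sigma R σ h, ← brzMul_tmul]
  | add y₁ y₂ h₁ h₂ => simp [add_tmul, h₁, h₂]

lemma key (h : IsBrzezinski k e R σ) (v : V) (y z : A ⊗[k] V) :
    brzMul k R σ (Sm R σ (v ⊗ₜ[k] y) ⊗ₜ[k] z)
      = Sm R σ (v ⊗ₜ[k] brzMul k R σ (y ⊗ₜ[k] z)) := by
  induction y using TensorProduct.induction_on with
  | zero => simp
  | tmul b w => rw [Sm_tmul, brzMul_Gm R σ h, brzMul_tmul, Sm_muls2 R σ h]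
  | add y₁ y₂ h₁ h₂ => simp [tmul_add, add_tmul, h₁, h₂]

lemma muls2_one (x : A ⊗[k] V) : muls2 k A V ((1 : A) ⊗ₜ[k] x) = x := by
  induction x using TensorProduct.induction_on with
  | zero => simp
  | tmul b w => simp [muls2_tmul]
  | add x₁ x₂ h₁ h₂ => simp [tmul_add, h₁, h₂]

lemma Sm_e (h : IsBrzezinski k e R σ) (x : A ⊗[k] V) : Sm R σ (e ⊗ₜ[k] x) = x := by
  induction x using TensorProduct.induction_on with
  | zero => simp
  | tmul b w => rw [Sm_tmul, h.unit_R_left, Gm_tmul, h.unit_σ_left, muls2_tmul, mul_one]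
  | add x₁ x₂ h₁ h₂ => simp [tmul_add, h₁, h₂]

end BrzAux

/-- the Brzezinski crossed product multiplication on `A ⊗ V` is associative
with unit `1_A ⊗ 1_V`, provided `(R, σ)` satisfy the crossed product axioms. -/
theorem statement1 {k A V : Type u} [Field k] [Ring A] [Algebra k A]
    [AddCommGroup V] [Module k V] (e : V)
    (R : V ⊗[k] A →ₗ[k] A ⊗[k] V) (σ : V ⊗[k] V →ₗ[k] A ⊗[k] V)
    (h : IsBrzezinski k e R σ) :
    (∀ x y z : A ⊗[k] V,
      brzMul k R σ (brzMul k R σ (x ⊗ₜ y) ⊗ₜ z)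
        = brzMul k R σ (x ⊗ₜ brzMul k R σ (y ⊗ₜ z))) ∧
    (∀ x : A ⊗[k] V, brzMul k R σ (((1 : A) ⊗ₜ e) ⊗ₜ x) = x) ∧
    (∀ x : A ⊗[k] V, brzMul k R σ (x ⊗ₜ ((1 : A) ⊗ₜ e)) = x) := by
  classical
  open BrzAux in
  refine ⟨fun x y z => ?_, fun x => ?_, fun x => ?_⟩
  · induction x using TensorProduct.induction_on with
    | zero => simp
    | tmul a v => rw [brzMul_tmul, brzMul_muls2, key R σ h, ← brzMul_tmul]
    | add x₁ x₂ h₁ h₂ => simp [add_tmul, h₁, h₂]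
  · rw [brzMul_tmul, Sm_e R σ h, muls2_one]
  · induction x using TensorProduct.induction_on with
    | zero => simp
    | tmul a v =>
      rw [brzMul_tmul, Sm_tmul, h.unit_R_right, Gm_tmul, h.unit_σ_right,
        muls2_tmul, one_mul, muls2_tmul, mul_one]
    | add x₁ x₂ h₁ h₂ => simp [add_tmul, h₁, h₂]
end
end

section
/- (Invariance under twisting for crossed products.) Let A ⊗_{R,σ} V be a Brzeziński crossed product and θ, γ : V → A ⊗ V linear maps, written θ(v) = v_{<-1>} ⊗ v_{<0>} and γ(v) = v_{\{-1\}} ⊗ v_{\{0\}}. Define R' = (μ₂⊗id_V)∘(id_A⊗id_A⊗γ)∘(id_A⊗R)∘(θ⊗id_A) and σ' = (μ⊗id_V)∘(id_A⊗γ)∘(μ₂⊗id_V)∘(id_A⊗id_A⊗σ)∘(id_A⊗R⊗id_V)∘(θ⊗θ). If θ(1_V) = γ(1_V) = 1_A⊗1_V, v_{<-1>} v_{<0>_{\{-1\}}} ⊗ v_{<0>_{\{0\}}} = 1_A ⊗ v, v_{\{-1\}} v_{\{0\}_{<-1>}} ⊗ v_{\{0\}_{<0>}} = 1_A ⊗ v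 for all v ∈ V, and (μ⊗id_V)∘(μ⊗σ')∘(id_A⊗γ⊗id_V)∘(R⊗id_V)∘(id_V⊗γ) = (μ⊗id_V)∘(id_A⊗γ)∘σ, then A ⊗_{R',σ'} V is a Brzeziński crossed product and the map φ : A ⊗_{R',σ'} V → A ⊗_{R,σ} V, φ(a⊗v) = a v_{<-1>} ⊗ v_{<0>}, is an algebra isomorphism. -/
open TensorProduct LinearMap Coalgebra

noncomputable section

namespace Paper
namespace S4

open TensorProduct LinearMap

variable {k A V : Type u} [Field k] [Ring A] [Algebra k A]
  [AddCommGroup V] [Module k V]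

@[simp] lemma muls2_tmul (a b : A) (v : V) :
    muls2 k A V (a ⊗ₜ (b ⊗ₜ v)) = (a * b) ⊗ₜ[k] v := by
  simp [muls2, mul'_apply]

/-- Left multiplication on the first tensor factor. -/
def lm (a : A) : A ⊗[k] V →ₗ[k] A ⊗[k] V :=
  muls2 k A V ∘ₗ TensorProduct.mk k A (A ⊗[k] V) a

lemma lm_apply (a : A) (z : A ⊗[k] V) :
    lm a z = muls2 k A V (a ⊗ₜ z) := rfl

@[simp] lemma lm_tmul (a b : A) (v : V) :
    lm a (b ⊗ₜ[k] v) = (a * b) ⊗ₜ[k] v := by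
  simp [lm_apply]

lemma lm_lm (a b : A) (z : A ⊗[k] V) : lm a (lm b z) = lm (a * b) z := by
  induction z using TensorProduct.induction_on with
  | zero => simp
  | tmul c v => simp [mul_assoc]
  | add x y hx hy => simp [hx, hy]

@[simp] lemma lm_one (z : A ⊗[k] V) : lm (1 : A) z = z := by
  induction z using TensorProduct.induction_on with
  | zero => simp
  | tmul c v => simp
  | add x y hx hy => simp [hx, hy]

section RS
variable (R : V ⊗[k] A →ₗ[k] A ⊗[k] V) (σ : V ⊗[k] V →ₗ[k] A ⊗[k] V)

/-- `z ↦ z ·σ w`, i.e. `(d ⊗ x) ↦ d σ(x ⊗ w)`. -/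
def Jmap (w : V) : A ⊗[k] V →ₗ[k] A ⊗[k] V :=
  muls2 k A V ∘ₗ lTensor A σ ∘ₗ (TensorProduct.assoc k A V V).toLinearMap
    ∘ₗ (TensorProduct.mk k (A ⊗[k] V) V).flip w

def Bmap : V ⊗[k] (A ⊗[k] V) →ₗ[k] A ⊗[k] V :=
  muls2 k A V ∘ₗ lTensor A σ ∘ₗ (TensorProduct.assoc k A V V).toLinearMap
    ∘ₗ rTensor V R ∘ₗ (TensorProduct.assoc k V A V).symm.toLinearMap

def Qmap (v : V) : A ⊗[k] V →ₗ[k] A ⊗[k] V :=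
  Bmap R σ ∘ₗ TensorProduct.mk k V (A ⊗[k] V) v

def Gmap (b : A) : A ⊗[k] V →ₗ[k] A ⊗[k] V :=
  muls2 k A V ∘ₗ lTensor A R ∘ₗ (TensorProduct.assoc k A V A).toLinearMap
    ∘ₗ (TensorProduct.mk k (A ⊗[k] V) A).flip b

variable {R σ}

lemma Jmap_tmul (w : V) (d : A) (x : V) :
    Jmap σ w (d ⊗ₜ x) = lm d (σ (x ⊗ₜ w)) := by
  simp [Jmap, lm_apply]

lemma Qmap_apply (v : V) (z : A ⊗[k] V) :
    Qmap R σ v z = Bmap R σ (v ⊗ₜ z) := rfl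

lemma Qmap_tmul (v : V) (b : A) (w : V) :
    Qmap R σ v (b ⊗ₜ w) = Jmap σ w (R (v ⊗ₜ b)) := by
  simp [Qmap, Bmap, Jmap]

lemma Gmap_tmul (b d : A) (x : V) :
    Gmap R b (d ⊗ₜ x) = lm d (R (x ⊗ₜ b)) := by
  simp [Gmap, lm_apply]

lemma mul_tmul' (a : A) (v : V) (y : A ⊗[k] V) :
    brzMul k R σ ((a ⊗ₜ v) ⊗ₜ y) = lm a (Qmap R σ v y) := by
  simp [brzMul, Qmap, Bmap, lm_apply]

lemma Jmap_lm (w : V) (a : A) (z : A ⊗[k] V) :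
    Jmap σ w (lm a z) = lm a (Jmap σ w z) := by
  induction z using TensorProduct.induction_on with
  | zero => simp
  | tmul b x => simp [Jmap_tmul, lm_lm]
  | add x y hx hy => simp [hx, hy]

lemma Gmap_lm (b a : A) (z : A ⊗[k] V) :
    Gmap R b (lm a z) = lm a (Gmap R b z) := by
  induction z using TensorProduct.induction_on with
  | zero => simp
  | tmul d x => simp [Gmap_tmul, lm_lm]
  | add x y hx hy => simp [hx, hy]

lemma mul_lm (a : A) (x z : A ⊗[k] V) :
    brzMul k R σ (lm a x ⊗ₜ z) = lm a (brzMul k R σ (x ⊗ₜ z)) := by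
  induction x using TensorProduct.induction_on with
  | zero => simp
  | tmul b v => simp [mul_tmul', lm_lm]
  | add x y hx hy => simp [add_tmul, hx, hy]

end RS
section Units
variable {R : V ⊗[k] A →ₗ[k] A ⊗[k] V} {σ : V ⊗[k] V →ₗ[k] A ⊗[k] V} {e : V}

lemma Je_id (hσr : ∀ v : V, σ (v ⊗ₜ e) = (1 : A) ⊗ₜ v) (z : A ⊗[k] V) :
    Jmap σ e z = z := by
  induction z using TensorProduct.induction_on with
  | zero => simp
  | tmul b x => simp [Jmap_tmul, hσr]
  | add x y hx hy => simp [hx, hy]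

lemma Qe_id (hRl : ∀ a : A, R (e ⊗ₜ a) = a ⊗ₜ e)
    (hσl : ∀ v : V, σ (e ⊗ₜ v) = (1 : A) ⊗ₜ v) (z : A ⊗[k] V) :
    Qmap R σ e z = z := by
  induction z using TensorProduct.induction_on with
  | zero => simp
  | tmul b w => simp [Qmap_tmul, hRl, Jmap_tmul, hσl]
  | add x y hx hy => simp [hx, hy]

lemma mul_be (hσr : ∀ v : V, σ (v ⊗ₜ e) = (1 : A) ⊗ₜ v) (z : A ⊗[k] V) (b : A) :
    brzMul k R σ (z ⊗ₜ (b ⊗ₜ e)) = Gmap R b z := by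
  induction z using TensorProduct.induction_on with
  | zero => simp
  | tmul d x => rw [mul_tmul', Qmap_tmul, Je_id hσr, Gmap_tmul]
  | add x y hx hy => simp [add_tmul, hx, hy]

lemma mul_oneu (hRr : ∀ v : V, R (v ⊗ₜ (1 : A)) = (1 : A) ⊗ₜ v)
    (s : A ⊗[k] V) (u : V) :
    brzMul k R σ (s ⊗ₜ ((1 : A) ⊗ₜ u)) = Jmap σ u s := by
  induction s using TensorProduct.induction_on with
  | zero => simp
  | tmul d x => rw [mul_tmul', Qmap_tmul, hRr, Jmap_tmul, lm_one, Jmap_tmul]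
  | add x y hx hy => simp [add_tmul, hx, hy]

lemma R_from_mul (hσr : ∀ v : V, σ (v ⊗ₜ e) = (1 : A) ⊗ₜ v) (v : V) (a : A) :
    brzMul k R σ (((1 : A) ⊗ₜ v) ⊗ₜ (a ⊗ₜ e)) = R (v ⊗ₜ a) := by
  rw [mul_tmul', lm_one, Qmap_tmul, Je_id hσr]

lemma σ_from_mul (hRr : ∀ v : V, R (v ⊗ₜ (1 : A)) = (1 : A) ⊗ₜ v) (v w : V) :
    brzMul k R σ (((1 : A) ⊗ₜ v) ⊗ₜ ((1 : A) ⊗ₜ w)) = σ (v ⊗ₜ w) := by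
  rw [mul_tmul', lm_one, Qmap_tmul, hRr, Jmap_tmul, lm_one]

lemma ae_mul_be (hRl : ∀ a : A, R (e ⊗ₜ a) = a ⊗ₜ e)
    (hσl : ∀ v : V, σ (e ⊗ₜ v) = (1 : A) ⊗ₜ v) (a b : A) :
    brzMul k R σ ((a ⊗ₜ e) ⊗ₜ (b ⊗ₜ e)) = (a * b) ⊗ₜ e := by
  rw [mul_tmul', Qe_id hRl hσl, lm_tmul]

end Units

section Brz
variable {e : V} {R : V ⊗[k] A →ₗ[k] A ⊗[k] V} {σ : V ⊗[k] V →ₗ[k] A ⊗[k] V}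

/-- Pointwise bridges for the operator identities (1.3)-(1.5). -/
lemma brz3_lhs_apply (v : V) (a b : A) :
    (R ∘ₗ lTensor V (mul' k A)) (v ⊗ₜ (a ⊗ₜ b)) = R (v ⊗ₜ (a * b)) := by
  simp [mul'_apply]

lemma brz3_rhs_apply (v : V) (a b : A) :
    (rTensor V (mul' k A) ∘ₗ (TensorProduct.assoc k A A V).symm.toLinearMap
        ∘ₗ lTensor A R ∘ₗ (TensorProduct.assoc k A V A).toLinearMap
        ∘ₗ rTensor A R ∘ₗ (TensorProduct.assoc k V A A).symm.toLinearMap)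
      (v ⊗ₜ (a ⊗ₜ b)) = Gmap R b (R (v ⊗ₜ a)) := by
  simp [Gmap, muls2]

lemma brz4_lhs_apply (v w u : V) :
    (muls2 k A V ∘ₗ lTensor A σ ∘ₗ (TensorProduct.assoc k A V V).toLinearMap
        ∘ₗ rTensor V R ∘ₗ (TensorProduct.assoc k V A V).symm.toLinearMap ∘ₗ lTensor V σ)
      (v ⊗ₜ (w ⊗ₜ u)) = Qmap R σ v (σ (w ⊗ₜ u)) := by
  simp [Qmap, Bmap]

lemma brz4_rhs_apply (v w u : V) :
    (muls2 k A V ∘ₗ lTensor A σ ∘ₗ (TensorProduct.assoc k A V V).toLinearMap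
        ∘ₗ rTensor V σ ∘ₗ (TensorProduct.assoc k V V V).symm.toLinearMap)
      (v ⊗ₜ (w ⊗ₜ u)) = Jmap σ u (σ (v ⊗ₜ w)) := by
  simp [Jmap]

lemma brz5_lhs_apply (v w : V) (a : A) :
    (muls2 k A V ∘ₗ lTensor A σ ∘ₗ (TensorProduct.assoc k A V V).toLinearMap
        ∘ₗ rTensor V R ∘ₗ (TensorProduct.assoc k V A V).symm.toLinearMap ∘ₗ lTensor V R)
      (v ⊗ₜ (w ⊗ₜ a)) = Qmap R σ v (R (w ⊗ₜ a)) := by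
  simp [Qmap, Bmap]

lemma brz5_rhs_apply (v w : V) (a : A) :
    (muls2 k A V ∘ₗ lTensor A R ∘ₗ (TensorProduct.assoc k A V A).toLinearMap
        ∘ₗ rTensor A σ ∘ₗ (TensorProduct.assoc k V V A).symm.toLinearMap)
      (v ⊗ₜ (w ⊗ₜ a)) = Gmap R a (σ (v ⊗ₜ w)) := by
  simp [Gmap]

variable (h : IsBrzezinski k e R σ)
include h

lemma brz3' (v : V) (a b : A) :
    R (v ⊗ₜ (a * b)) = Gmap R b (R (v ⊗ₜ a)) := by
  rw [← brz3_lhs_apply, h.brz3, brz3_rhs_apply]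

lemma brz4' (v w u : V) :
    Qmap R σ v (σ (w ⊗ₜ u)) = Jmap σ u (σ (v ⊗ₜ w)) := by
  rw [← brz4_lhs_apply, h.brz4, brz4_rhs_apply]

lemma brz5' (v w : V) (a : A) :
    Qmap R σ v (R (w ⊗ₜ a)) = Gmap R a (σ (v ⊗ₜ w)) := by
  rw [← brz5_lhs_apply (σ := σ), h.brz5, brz5_rhs_apply]

lemma mul_tmul_right (s : A ⊗[k] V) (c : A) (u : V) :
    brzMul k R σ (s ⊗ₜ (c ⊗ₜ u)) = Jmap σ u (Gmap R c s) := by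
  clear h
  induction s using TensorProduct.induction_on with
  | zero => simp
  | tmul d x => rw [mul_tmul', Qmap_tmul, Gmap_tmul, Jmap_lm]
  | add x y hx hy => simp [add_tmul, hx, hy]

lemma Q_lm (v : V) (b : A) (y : A ⊗[k] V) :
    Qmap R σ v (lm b y) = brzMul k R σ (R (v ⊗ₜ b) ⊗ₜ y) := by
  induction y using TensorProduct.induction_on with
  | zero => simp
  | tmul c u =>
      rw [lm_tmul, Qmap_tmul, brz3' h, mul_tmul_right h]
  | add x y hx hy => simp [tmul_add, hx, hy]

lemma mul_sigma_right (z : A ⊗[k] V) (w u : V) :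
    brzMul k R σ (z ⊗ₜ σ (w ⊗ₜ u)) = Jmap σ u (Jmap σ w z) := by
  induction z using TensorProduct.induction_on with
  | zero => simp
  | tmul d y =>
      rw [mul_tmul', brz4' h, Jmap_tmul, Jmap_lm]
  | add x y hx hy => simp [add_tmul, hx, hy]

lemma QJ_comm (x u : V) (y : A ⊗[k] V) :
    Qmap R σ x (Jmap σ u y) = Jmap σ u (Qmap R σ x y) := by
  induction y using TensorProduct.induction_on with
  | zero => simp
  | tmul c w =>
      rw [Jmap_tmul, Q_lm h, mul_sigma_right h, Qmap_tmul]
  | add p q hp hq => simp [hp, hq]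

lemma mul_sigma_left (x w : V) (z : A ⊗[k] V) :
    brzMul k R σ (σ (x ⊗ₜ w) ⊗ₜ z) = Qmap R σ x (Qmap R σ w z) := by
  induction z using TensorProduct.induction_on with
  | zero => simp
  | tmul c u =>
      rw [mul_tmul_right h, ← brz5' h, Qmap_tmul, QJ_comm h]
  | add p q hp hq => simp [tmul_add, hp, hq]

lemma mul_J_left (w : V) (y z : A ⊗[k] V) :
    brzMul k R σ (Jmap σ w y ⊗ₜ z) = brzMul k R σ (y ⊗ₜ Qmap R σ w z) := by
  induction y using TensorProduct.induction_on with
  | zero => simp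
  | tmul d x =>
      rw [Jmap_tmul, mul_lm, mul_sigma_left h, mul_tmul']
  | add p q hp hq => simp [add_tmul, hp, hq]

/-- Associativity of the Brzezinski crossed product. -/
lemma brz_assoc (x y z : A ⊗[k] V) :
    brzMul k R σ (brzMul k R σ (x ⊗ₜ y) ⊗ₜ z)
      = brzMul k R σ (x ⊗ₜ brzMul k R σ (y ⊗ₜ z)) := by
  induction x using TensorProduct.induction_on with
  | zero => simp
  | tmul a v =>
      induction y using TensorProduct.induction_on with
      | zero => simp
      | tmul b w =>
          rw [mul_tmul', Qmap_tmul, mul_lm, mul_J_left h, mul_tmul', mul_tmul',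
            Q_lm h]
      | add p q hp hq => simp [add_tmul, tmul_add, hp, hq]
  | add p q hp hq => simp [add_tmul, hp, hq]

end Brz

section Tw
variable {θ γ : V →ₗ[k] A ⊗[k] V}

lemma φ_tmul (a : A) (v : V) : φtw k θ (a ⊗ₜ v) = lm a (θ v) := by
  simp [φtw, lm_apply]

lemma φ_lm (a : A) (z : A ⊗[k] V) : φtw k θ (lm a z) = lm a (φtw k θ z) := by
  induction z using TensorProduct.induction_on with
  | zero => simp
  | tmul b v => rw [lm_tmul, φ_tmul, φ_tmul, lm_lm]
  | add x y hx hy => simp [hx, hy]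

lemma φ_cancel_point (hc : muls2 k A V ∘ₗ lTensor A γ ∘ₗ θ = TensorProduct.mk k A V 1)
    (v : V) : φtw k γ (θ v) = (1 : A) ⊗ₜ v := by
  have := LinearMap.congr_fun hc v
  simpa [φtw] using this

lemma φ_cancel (hc : muls2 k A V ∘ₗ lTensor A γ ∘ₗ θ = TensorProduct.mk k A V 1)
    (z : A ⊗[k] V) : φtw k γ (φtw k θ z) = z := by
  induction z using TensorProduct.induction_on with
  | zero => simp
  | tmul a v => rw [φ_tmul, φ_lm, φ_cancel_point hc, lm_tmul, mul_one]
  | add x y hx hy => simp [hx, hy]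

lemma muls3_lm (a : A) (X : A ⊗[k] (A ⊗[k] V)) :
    muls3 k A V (a ⊗ₜ X) = lm a (muls2 k A V X) := by
  simp [muls3, lm_apply]

lemma φtw_def' (z : A ⊗[k] V) :
    muls2 k A V (lTensor A γ z) = φtw k γ z := rfl

variable {R : V ⊗[k] A →ₗ[k] A ⊗[k] V} {σ : V ⊗[k] V →ₗ[k] A ⊗[k] V}

lemma Jmap_def' (w : V) (z : A ⊗[k] V) :
    muls2 k A V (lTensor A σ ((TensorProduct.assoc k A V V) (z ⊗ₜ w)))
      = Jmap σ w z := rfl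

lemma Rtw_eq (v : V) (a : A) :
    Rtw k R θ γ (v ⊗ₜ a) = φtw k γ (Gmap R a (θ v)) := by
  have h0 : Rtw k R θ γ (v ⊗ₜ a)
      = (muls3 k A V ∘ₗ lTensor A (lTensor A γ) ∘ₗ lTensor A R
          ∘ₗ (TensorProduct.assoc k A V A).toLinearMap) (θ v ⊗ₜ a) := by
    simp [Rtw]
  rw [h0]
  induction θ v using TensorProduct.induction_on with
  | zero => simp
  | tmul t1 t2 =>
      simp only [LinearMap.coe_comp, LinearEquiv.coe_coe, Function.comp_apply,
        TensorProduct.assoc_tmul, lTensor_tmul]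
      rw [muls3_lm, φtw_def', Gmap_tmul, φ_lm]
  | add x y hx hy => simp only [add_tmul, map_add, hx, hy]

lemma σtw_eq (x w : V) :
    σtw k R σ θ γ (x ⊗ₜ w) = φtw k γ (brzMul k R σ (θ x ⊗ₜ θ w)) := by
  have h0 : σtw k R σ θ γ (x ⊗ₜ w)
      = (muls2 k A V ∘ₗ lTensor A γ ∘ₗ muls3 k A V ∘ₗ lTensor A (lTensor A σ)
          ∘ₗ lTensor A ((TensorProduct.assoc k A V V).toLinearMap ∘ₗ rTensor V R
              ∘ₗ (TensorProduct.assoc k V A V).symm.toLinearMap)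
          ∘ₗ (TensorProduct.assoc k A V (A ⊗[k] V)).toLinearMap) (θ x ⊗ₜ θ w) := by
    simp [σtw]
  rw [h0]
  induction θ x using TensorProduct.induction_on with
  | zero => simp
  | tmul p1 p2 =>
      induction θ w using TensorProduct.induction_on with
      | zero => simp
      | tmul q1 q2 =>
          simp only [LinearMap.coe_comp, LinearEquiv.coe_coe, Function.comp_apply,
            TensorProduct.assoc_tmul, lTensor_tmul, TensorProduct.assoc_symm_tmul,
            rTensor_tmul]
          rw [muls3_lm, Jmap_def', φtw_def', mul_tmul', Qmap_tmul, φ_lm]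
      | add x1 y1 hx hy => simp only [tmul_add, map_add, hx, hy]
  | add x1 y1 hx hy => simp only [add_tmul, map_add, hx, hy]

end Tw

section Main
variable {e : V} {R : V ⊗[k] A →ₗ[k] A ⊗[k] V} {σ : V ⊗[k] V →ₗ[k] A ⊗[k] V}
variable {θ γ : V →ₗ[k] A ⊗[k] V}

lemma G1_id (hRr : ∀ v : V, R (v ⊗ₜ (1 : A)) = (1 : A) ⊗ₜ v) (z : A ⊗[k] V) :
    Gmap R 1 z = z := by
  induction z using TensorProduct.induction_on with
  | zero => simp
  | tmul d x => rw [Gmap_tmul, hRr]; simp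
  | add x y hx hy => simp [hx, hy]

variable (h : IsBrzezinski k e R σ) (hθe : θ e = (1 : A) ⊗ₜ e)
  (hγe : γ e = (1 : A) ⊗ₜ e)
  (hγθ : muls2 k A V ∘ₗ lTensor A γ ∘ₗ θ = TensorProduct.mk k A V 1)
  (hθγ : muls2 k A V ∘ₗ lTensor A θ ∘ₗ γ = TensorProduct.mk k A V 1)

include h hθe hγe hγθ hθγ

lemma unitR'l (a : A) : Rtw k R θ γ (e ⊗ₜ a) = a ⊗ₜ e := by
  rw [Rtw_eq, hθe, Gmap_tmul, lm_one, h.unit_R_left, φ_tmul, hγe, lm_tmul, mul_one]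

lemma unitR'r (v : V) : Rtw k R θ γ (v ⊗ₜ (1 : A)) = (1 : A) ⊗ₜ v := by
  rw [Rtw_eq, G1_id h.unit_R_right, φ_cancel_point hγθ]

lemma unitσ'l (v : V) : σtw k R σ θ γ (e ⊗ₜ v) = (1 : A) ⊗ₜ v := by
  rw [σtw_eq, hθe, mul_tmul', lm_one, Qe_id h.unit_R_left h.unit_σ_left,
    φ_cancel_point hγθ]

lemma unitσ'r (v : V) : σtw k R σ θ γ (v ⊗ₜ e) = (1 : A) ⊗ₜ v := by
  rw [σtw_eq, hθe, mul_oneu h.unit_R_right, Je_id h.unit_σ_right,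
    φ_cancel_point hγθ]

lemma Jp_eq (w : V) (z : A ⊗[k] V) :
    Jmap (σtw k R σ θ γ) w z
      = φtw k γ (brzMul k R σ (φtw k θ z ⊗ₜ θ w)) := by
  induction z using TensorProduct.induction_on with
  | zero => simp
  | tmul d x => rw [Jmap_tmul, σtw_eq, ← φ_lm, ← mul_lm, ← φ_tmul]
  | add x y hx hy => simp only [map_add, add_tmul, hx, hy]

lemma mult (x y : A ⊗[k] V) :
    φtw k θ (brzMul k (Rtw k R θ γ) (σtw k R σ θ γ) (x ⊗ₜ y))
      = brzMul k R σ (φtw k θ x ⊗ₜ φtw k θ y) := by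
  induction x using TensorProduct.induction_on with
  | zero => simp
  | tmul a v =>
      induction y using TensorProduct.induction_on with
      | zero => simp
      | tmul b w =>
          rw [mul_tmul', Qmap_tmul, φ_lm, Jp_eq h hθe hγe hγθ hθγ,
            φ_cancel hθγ, Rtw_eq, φ_cancel hθγ, φ_tmul, φ_tmul, mul_lm]
          have h1 : lm b (θ w) = brzMul k R σ ((b ⊗ₜ e) ⊗ₜ θ w) := by
            rw [mul_tmul', Qe_id h.unit_R_left h.unit_σ_left]
          rw [h1, ← brz_assoc h, mul_be h.unit_σ_right]
      | add y1 y2 hy1 hy2 => simp only [tmul_add, map_add, hy1, hy2]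
  | add x1 x2 hx1 hx2 => simp only [add_tmul, map_add, hx1, hx2]

lemma φ_bij : Function.Bijective (φtw k θ (A := A) (V := V)) :=
  ⟨Function.LeftInverse.injective (g := φtw k γ) (φ_cancel hγθ),
   Function.RightInverse.surjective (g := φtw k γ) (φ_cancel hθγ)⟩

lemma assocp (x y z : A ⊗[k] V) :
    brzMul k (Rtw k R θ γ) (σtw k R σ θ γ)
        (brzMul k (Rtw k R θ γ) (σtw k R σ θ γ) (x ⊗ₜ y) ⊗ₜ z)
      = brzMul k (Rtw k R θ γ) (σtw k R σ θ γ)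
          (x ⊗ₜ brzMul k (Rtw k R θ γ) (σtw k R σ θ γ) (y ⊗ₜ z)) := by
  apply (φ_bij h hθe hγe hγθ hθγ).injective
  rw [mult h hθe hγe hγθ hθγ, mult h hθe hγe hγθ hθγ, mult h hθe hγe hγθ hθγ,
    mult h hθe hγe hγθ hθγ, brz_assoc h]

lemma brz_tw : IsBrzezinski k e (Rtw k R θ γ) (σtw k R σ θ γ) := by
  have hR'l := unitR'l h hθe hγe hγθ hθγ
  have hR'r := unitR'r h hθe hγe hγθ hθγ
  have hσ'l := unitσ'l h hθe hγe hγθ hθγ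
  have hσ'r := unitσ'r h hθe hγe hγθ hθγ
  have hassoc := assocp h hθe hγe hγθ hθγ
  have q1 : ∀ (v : V) (z : A ⊗[k] V),
      brzMul k (Rtw k R θ γ) (σtw k R σ θ γ) (((1 : A) ⊗ₜ v) ⊗ₜ z)
        = Qmap (Rtw k R θ γ) (σtw k R σ θ γ) v z := by
    intro v z; rw [mul_tmul', lm_one]
  refine ⟨hR'l, hR'r, hσ'l, hσ'r, ?_, ?_, ?_⟩
  · apply TensorProduct.ext'
    intro v y
    induction y using TensorProduct.induction_on with
    | zero => simp only [tmul_zero, map_zero]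
    | tmul a b =>
        rw [brz3_lhs_apply, brz3_rhs_apply, ← R_from_mul hσ'r,
          ← ae_mul_be hR'l hσ'l, ← hassoc, R_from_mul hσ'r, mul_be hσ'r]
    | add y1 y2 hy1 hy2 => simp only [tmul_add, map_add, hy1, hy2]
  · apply TensorProduct.ext'
    intro v y
    induction y using TensorProduct.induction_on with
    | zero => simp only [tmul_zero, map_zero]
    | tmul w u =>
        rw [brz4_lhs_apply, brz4_rhs_apply, ← q1, ← σ_from_mul hR'r, ← hassoc,
          σ_from_mul hR'r, mul_oneu hR'r]
    | add y1 y2 hy1 hy2 => simp only [tmul_add, map_add, hy1, hy2]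
  · apply TensorProduct.ext'
    intro v y
    induction y using TensorProduct.induction_on with
    | zero => simp only [tmul_zero, map_zero]
    | tmul w a =>
        rw [brz5_lhs_apply, brz5_rhs_apply, ← q1, ← R_from_mul hσ'r, ← hassoc,
          σ_from_mul hR'r, mul_be hσ'r]
    | add y1 y2 hy1 hy2 => simp only [tmul_add, map_add, hy1, hy2]

end Main

end S4
end Paper

universe u
open Paper

/-- invariance under twisting for crossed products. If `(θ, γ)` satisfy
(cros1)--(cros4), then `A ⊗_{R',σ'} V` is a crossed product and
`φ(a ⊗ v) = a v_{<-1>} ⊗ v_{<0>}` is an algebra isomorphism onto `A ⊗_{R,σ} V`. -/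
theorem statement4 {k A V : Type u} [Field k] [Ring A] [Algebra k A]
    [AddCommGroup V] [Module k V] (e : V)
    (R : V ⊗[k] A →ₗ[k] A ⊗[k] V) (σ : V ⊗[k] V →ₗ[k] A ⊗[k] V)
    (h : IsBrzezinski k e R σ) (θ γ : V →ₗ[k] A ⊗[k] V)
    (h123 : Cros123 k e θ γ) (h4 : Cros4 k R σ γ (σtw k R σ θ γ)) :
    IsBrzezinski k e (Rtw k R θ γ) (σtw k R σ θ γ) ∧
    Function.Bijective (φtw k θ) ∧
    φtw k θ ((1 : A) ⊗ₜ e) = (1 : A) ⊗ₜ e ∧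
    (∀ x y : A ⊗[k] V,
      φtw k θ (brzMul k (Rtw k R θ γ) (σtw k R σ θ γ) (x ⊗ₜ y))
        = brzMul k R σ (φtw k θ x ⊗ₜ φtw k θ y)) := by
  obtain ⟨hθe, hγe, hγθ, hθγ⟩ := h123
  refine ⟨Paper.S4.brz_tw h hθe hγe hγθ hθγ, Paper.S4.φ_bij h hθe hγe hγθ hθγ, ?_,
    fun x y => Paper.S4.mult h hθe hγe hγθ hθγ x y⟩
  rw [Paper.S4.φ_tmul, hθe, Paper.S4.lm_one]
end
end

section
/- Two Brzeziński crossed products A ⊗_{R,σ} V and A ⊗_{R',σ'} V are equivalent (i.e. there is an algebra isomorphism φ : A ⊗_{R',σ'} V → A ⊗_{R,σ} V with φ(a ⊗ 1_V) = a ⊗ 1_V for all a ∈ A) if and only if there exist linear maps θ, γ : V → A ⊗ V satisfying: θ(1_V) = γ(1_V) = 1_A ⊗ 1_V; v_{<-1>} v_{<0>_{\{-1\}}} ⊗ v_{<0>_{\{0\}}} = 1_A ⊗ v; v_{\{-1\}} v_{\{0\}_{<-1>}} ⊗ v_{\{0\}_{<0>}} = 1_A ⊗ v; R' = (μ₂⊗id_V)∘(id_A⊗id_A⊗γ)∘(id_A⊗R)∘(θ⊗id_A);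 σ' = (μ⊗id_V)∘(id_A⊗γ)∘(μ₂⊗id_V)∘(id_A⊗id_A⊗σ)∘(id_A⊗R⊗id_V)∘(θ⊗θ); and (μ⊗id_V)∘(μ⊗σ')∘(id_A⊗γ⊗id_V)∘(R⊗id_V)∘(id_V⊗γ) = (μ⊗id_V)∘(id_A⊗γ)∘σ. -/
open TensorProduct LinearMap Coalgebra

noncomputable section

universe u
open Paper


section Statement5Helpers

open TensorProduct LinearMap Paper

variable {k A V : Type u} [Field k] [Ring A] [Algebra k A]
  [AddCommGroup V] [Module k V]

/-- Left multiplication by `a` on the first tensorand. -/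
def aq (a : A) : A ⊗[k] V →ₗ[k] A ⊗[k] V :=
  muls2 k A V ∘ₗ TensorProduct.mk k A (A ⊗[k] V) a

@[simp] lemma aq_tmul (a b : A) (v : V) :
    aq (k := k) a (b ⊗ₜ v) = (a * b) ⊗ₜ v := by
  simp [aq, muls2]

@[simp] lemma muls2_tmul (a b : A) (v : V) :
    muls2 k A V (a ⊗ₜ (b ⊗ₜ v)) = (a * b) ⊗ₜ v := by
  simp [muls2]

lemma muls2_eq_aq (a : A) (x : A ⊗[k] V) : muls2 k A V (a ⊗ₜ x) = aq a x := rfl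

lemma aq_aq (a b : A) (x : A ⊗[k] V) :
    aq (k := k) a (aq b x) = aq (a * b) x := by
  induction x using TensorProduct.induction_on with
  | zero => simp
  | tmul c v => simp [mul_assoc]
  | add x y hx hy => simp [hx, hy]

@[simp] lemma aq_one (x : A ⊗[k] V) : aq (k := k) (1 : A) x = x := by
  induction x using TensorProduct.induction_on with
  | zero => simp
  | tmul c v => simp
  | add x y hx hy => simp [hx, hy]

end Statement5Helpers

variable {k A V : Type u} [Field k] [Ring A] [Algebra k A]
  [AddCommGroup V] [Module k V]

namespace St5

open TensorProduct LinearMap Paper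

/-- `(c ⊗ u) ⊗ w ↦ c · σ(u ⊗ w)`. -/
def tsL (σ : V ⊗[k] V →ₗ[k] A ⊗[k] V) : (A ⊗[k] V) ⊗[k] V →ₗ[k] A ⊗[k] V :=
  muls2 k A V ∘ₗ lTensor A σ ∘ₗ (TensorProduct.assoc k A V V).toLinearMap

/-- `(c ⊗ u) ⊗ b ↦ c · R(u ⊗ b)`. -/
def rmulL (R : V ⊗[k] A →ₗ[k] A ⊗[k] V) : (A ⊗[k] V) ⊗[k] A →ₗ[k] A ⊗[k] V :=
  muls2 k A V ∘ₗ lTensor A R ∘ₗ (TensorProduct.assoc k A V A).toLinearMap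

/-- `v ⊗ (b ⊗ x) ↦ tsL (R (v ⊗ b) ⊗ x)`. -/
def tR (R : V ⊗[k] A →ₗ[k] A ⊗[k] V) (σ : V ⊗[k] V →ₗ[k] A ⊗[k] V) :
    V ⊗[k] (A ⊗[k] V) →ₗ[k] A ⊗[k] V :=
  tsL σ ∘ₗ rTensor V R ∘ₗ (TensorProduct.assoc k V A V).symm.toLinearMap

variable (R : V ⊗[k] A →ₗ[k] A ⊗[k] V) (σ : V ⊗[k] V →ₗ[k] A ⊗[k] V)

@[simp] lemma tsL_tmul (c : A) (u w : V) :
    tsL σ ((c ⊗ₜ u) ⊗ₜ w) = aq c (σ (u ⊗ₜ w)) := by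
  simp [tsL, muls2_eq_aq]

@[simp] lemma rmulL_tmul (c : A) (u : V) (b : A) :
    rmulL R ((c ⊗ₜ u) ⊗ₜ b) = aq c (R (u ⊗ₜ b)) := by
  simp [rmulL, muls2_eq_aq]

@[simp] lemma tR_tmul (v : V) (b : A) (x : V) :
    tR R σ (v ⊗ₜ (b ⊗ₜ x)) = tsL σ (R (v ⊗ₜ b) ⊗ₜ x) := by
  simp [tR]

lemma tsL_aq (a : A) (y : A ⊗[k] V) (w : V) :
    tsL σ (aq a y ⊗ₜ w) = aq a (tsL σ (y ⊗ₜ w)) := by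
  induction y using TensorProduct.induction_on with
  | zero => simp
  | tmul c v => simp [aq_aq]
  | add x y hx hy => simp [add_tmul, hx, hy]

lemma rmulL_aq (a : A) (y : A ⊗[k] V) (b : A) :
    rmulL R (aq a y ⊗ₜ b) = aq a (rmulL R (y ⊗ₜ b)) := by
  induction y using TensorProduct.induction_on with
  | zero => simp
  | tmul c v => simp [aq_aq]
  | add x y hx hy => simp [add_tmul, hx, hy]

lemma bm_tmul (a : A) (v : V) (y : A ⊗[k] V) :
    brzMul k R σ ((a ⊗ₜ v) ⊗ₜ y) = aq a (tR R σ (v ⊗ₜ y)) := by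
  simp only [brzMul, tR, tsL, aq, coe_comp, Function.comp_apply, LinearEquiv.coe_coe,
    TensorProduct.assoc_tmul, lTensor_tmul, TensorProduct.mk_apply]

lemma bm_aq_left (a : A) (x y : A ⊗[k] V) :
    brzMul k R σ (aq a x ⊗ₜ y) = aq a (brzMul k R σ (x ⊗ₜ y)) := by
  induction x using TensorProduct.induction_on with
  | zero => simp
  | tmul c v => simp [bm_tmul, aq_aq]
  | add x y hx hy => simp [add_tmul, hx, hy]

lemma bm_pure_right (t : A ⊗[k] V) (c : A) (u : V) :
    brzMul k R σ (t ⊗ₜ (c ⊗ₜ u)) = tsL σ (rmulL R (t ⊗ₜ c) ⊗ₜ u) := by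
  induction t using TensorProduct.induction_on with
  | zero => simp
  | tmul p q => simp [bm_tmul, tsL_aq]
  | add x y hx hy => simp [add_tmul, hx, hy]

variable {e : V} {R σ} (h : IsBrzezinski k e R σ)
include h

lemma tsL_e (y : A ⊗[k] V) : tsL σ (y ⊗ₜ e) = y := by
  induction y using TensorProduct.induction_on with
  | zero => simp
  | tmul c v => simp [h.unit_σ_right]
  | add x y hx hy => simp [add_tmul, hx, hy]

lemma bm_unit_left (a : A) (y : A ⊗[k] V) :
    brzMul k R σ ((a ⊗ₜ e) ⊗ₜ y) = aq a y := by
  induction y using TensorProduct.induction_on with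
  | zero => simp
  | tmul b w => simp [bm_tmul, h.unit_R_left, h.unit_σ_left]
  | add x y hx hy => simp [tmul_add, hx, hy]

lemma bm_tmul_e (y : A ⊗[k] V) (a : A) :
    brzMul k R σ (y ⊗ₜ (a ⊗ₜ e)) = rmulL R (y ⊗ₜ a) := by
  rw [bm_pure_right, tsL_e h]

lemma bm_unitR (v : V) (a : A) :
    brzMul k R σ ((1 ⊗ₜ v) ⊗ₜ (a ⊗ₜ e)) = R (v ⊗ₜ a) := by
  rw [bm_tmul_e h]; simp

lemma bm_sigma (v w : V) :
    brzMul k R σ (((1 : A) ⊗ₜ v) ⊗ₜ ((1 : A) ⊗ₜ w)) = σ (v ⊗ₜ w) := by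
  simp [bm_tmul, h.unit_R_right]

lemma brz3e (v : V) (b d : A) :
    R (v ⊗ₜ (b * d)) = rmulL R (R (v ⊗ₜ b) ⊗ₜ d) := by
  have := LinearMap.congr_fun h.brz3 (v ⊗ₜ (b ⊗ₜ d))
  simpa [rmulL, muls2, LinearMap.comp_apply] using this

lemma brz4e (v w u : V) :
    tR R σ (v ⊗ₜ σ (w ⊗ₜ u)) = tsL σ (σ (v ⊗ₜ w) ⊗ₜ u) := by
  have := LinearMap.congr_fun h.brz4 (v ⊗ₜ (w ⊗ₜ u))
  simpa [tR, tsL, LinearMap.comp_apply] using this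

lemma brz5e (v w : V) (a : A) :
    tR R σ (v ⊗ₜ R (w ⊗ₜ a)) = rmulL R (σ (v ⊗ₜ w) ⊗ₜ a) := by
  have := LinearMap.congr_fun h.brz5 (v ⊗ₜ (w ⊗ₜ a))
  simpa [tR, tsL, rmulL, muls2, LinearMap.comp_apply] using this

omit h

lemma lemC (n : A ⊗[k] V) (d : A) (x : V) :
    tsL σ (rmulL R (n ⊗ₜ d) ⊗ₜ x) = brzMul k R σ (n ⊗ₜ (d ⊗ₜ x)) := by
  induction n using TensorProduct.induction_on with
  | zero => simp
  | tmul c u => simp [bm_tmul, tsL_aq]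
  | add a b ha hb => simp [add_tmul, ha, hb]

include h

lemma lemD (v : V) (p : A) (z : A ⊗[k] V) :
    tR R σ (v ⊗ₜ aq p z) = brzMul k R σ (R (v ⊗ₜ p) ⊗ₜ z) := by
  induction z using TensorProduct.induction_on with
  | zero => simp
  | tmul d x => rw [aq_tmul, tR_tmul, brz3e h, lemC]
  | add a b ha hb => simp [tmul_add, ha, hb]

lemma lemSub (n : A ⊗[k] V) (q u : V) :
    tsL σ (tsL σ (n ⊗ₜ q) ⊗ₜ u) = brzMul k R σ (n ⊗ₜ σ (q ⊗ₜ u)) := by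
  induction n using TensorProduct.induction_on with
  | zero => simp
  | tmul c v => rw [tsL_tmul, tsL_aq, ← brz4e h, bm_tmul]
  | add a b ha hb => simp [add_tmul, ha, hb]

lemma lemA (m : A ⊗[k] V) (w : V) (c : A) :
    rmulL R (tsL σ (m ⊗ₜ w) ⊗ₜ c) = brzMul k R σ (m ⊗ₜ R (w ⊗ₜ c)) := by
  induction m using TensorProduct.induction_on with
  | zero => simp
  | tmul c1 v1 => rw [tsL_tmul, rmulL_aq, ← brz5e h, bm_tmul]
  | add a b ha hb => simp [add_tmul, ha, hb]

lemma lemB' (v : V) (y : A ⊗[k] V) (u : V) :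
    tsL σ (tR R σ (v ⊗ₜ y) ⊗ₜ u) = tR R σ (v ⊗ₜ tsL σ (y ⊗ₜ u)) := by
  induction y using TensorProduct.induction_on with
  | zero => simp
  | tmul p q => rw [tR_tmul, lemSub h, ← lemD h, tsL_tmul]
  | add a b ha hb => simp [tmul_add, add_tmul, ha, hb]

lemma lemA' (v : V) (y : A ⊗[k] V) (c : A) :
    rmulL R (tR R σ (v ⊗ₜ y) ⊗ₜ c) = tR R σ (v ⊗ₜ rmulL R (y ⊗ₜ c)) := by
  induction y using TensorProduct.induction_on with
  | zero => simp
  | tmul p q => rw [tR_tmul, lemA h, ← lemD h, rmulL_tmul]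
  | add a b ha hb => simp [tmul_add, add_tmul, ha, hb]

lemma brz_assoc (x y z : A ⊗[k] V) :
    brzMul k R σ (brzMul k R σ (x ⊗ₜ y) ⊗ₜ z)
      = brzMul k R σ (x ⊗ₜ brzMul k R σ (y ⊗ₜ z)) := by
  induction x using TensorProduct.induction_on with
  | zero => simp
  | add a b ha hb => simp [add_tmul, ha, hb]
  | tmul a v =>
    induction z using TensorProduct.induction_on with
    | zero => simp
    | add p q hp hq => simp [tmul_add, hp, hq]
    | tmul c u =>
      rw [bm_tmul, bm_aq_left, bm_pure_right, lemA' h, lemB' h,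
        bm_pure_right, bm_tmul]

end St5

namespace St5

open TensorProduct LinearMap Paper

variable {k A V : Type u} [Field k] [Ring A] [Algebra k A]
  [AddCommGroup V] [Module k V]

@[simp] lemma muls3_tmul (a : A) (z : A ⊗[k] (A ⊗[k] V)) :
    muls3 k A V (a ⊗ₜ z) = aq a (muls2 k A V z) := by
  simp [muls3, muls2_eq_aq]

@[simp] lemma φtw_tmul (θ : V →ₗ[k] A ⊗[k] V) (a : A) (v : V) :
    φtw k θ (a ⊗ₜ v) = aq a (θ v) := by
  simp [φtw, muls2_eq_aq]

lemma φtw_aq (θ : V →ₗ[k] A ⊗[k] V) (a : A) (x : A ⊗[k] V) :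
    φtw k θ (aq a x) = aq a (φtw k θ x) := by
  induction x using TensorProduct.induction_on with
  | zero => simp
  | tmul c v => simp [aq_aq]
  | add x y hx hy => simp [hx, hy]

variable (R : V ⊗[k] A →ₗ[k] A ⊗[k] V) (σ : V ⊗[k] V →ₗ[k] A ⊗[k] V)

/-- The inner pipeline of `Rtw`. -/
def Kγ (γ : V →ₗ[k] A ⊗[k] V) : (A ⊗[k] V) ⊗[k] A →ₗ[k] A ⊗[k] V :=
  muls3 k A V ∘ₗ lTensor A (lTensor A γ) ∘ₗ lTensor A R
    ∘ₗ (TensorProduct.assoc k A V A).toLinearMap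

@[simp] lemma Kγ_tmul (γ : V →ₗ[k] A ⊗[k] V) (c : A) (u : V) (a : A) :
    Kγ R γ ((c ⊗ₜ u) ⊗ₜ a) = aq c (φtw k γ (R (u ⊗ₜ a))) := by
  simp [Kγ, φtw]

lemma Rtw_apply (θ γ : V →ₗ[k] A ⊗[k] V) (v : V) (a : A) :
    Rtw k R θ γ (v ⊗ₜ a) = Kγ R γ (θ v ⊗ₜ a) := by
  simp [Rtw, Kγ]

lemma σtw_tmul (θ γ : V →ₗ[k] A ⊗[k] V) (v w : V) :
    σtw k R σ θ γ (v ⊗ₜ w) = φtw k γ (brzMul k R σ (θ v ⊗ₜ θ w)) := by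
  simp only [σtw, coe_comp, Function.comp_apply, TensorProduct.map_tmul]
  generalize θ v = x
  generalize θ w = y
  induction x using TensorProduct.induction_on with
  | zero => simp
  | add x₁ x₂ h1 h2 => simp only [add_tmul, map_add, h1, h2]
  | tmul a v' =>
    rw [bm_tmul]
    simp only [LinearEquiv.coe_coe, TensorProduct.assoc_tmul, lTensor_tmul, muls3_tmul, coe_comp, Function.comp_apply]
    rw [φtw_aq]
    have htr : muls2 k A V ((lTensor A σ) ((TensorProduct.assoc k A V V)
        ((rTensor V R) ((TensorProduct.assoc k V A V).symm (v' ⊗ₜ y)))))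
        = tR R σ (v' ⊗ₜ y) := by
      simp [tR, tsL]
    rw [htr, ← φtw_aq]
    simp [φtw]

end St5

open St5

/-- two crossed products `A ⊗_{R,σ} V` and `A ⊗_{R',σ'} V` are equivalent
iff there exist `θ, γ : V → A ⊗ V` satisfying conditions (Rprim)--(cros4). -/
theorem statement5 {k A V : Type u} [Field k] [Ring A] [Algebra k A]
    [AddCommGroup V] [Module k V] (e : V)
    (R R' : V ⊗[k] A →ₗ[k] A ⊗[k] V) (σ σ' : V ⊗[k] V →ₗ[k] A ⊗[k] V)
    (h : IsBrzezinski k e R σ) (h' : IsBrzezinski k e R' σ') :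
    (∃ φ : (A ⊗[k] V) ≃ₗ[k] A ⊗[k] V,
      (∀ x y : A ⊗[k] V, φ (brzMul k R' σ' (x ⊗ₜ y)) = brzMul k R σ (φ x ⊗ₜ φ y)) ∧
      (∀ a : A, φ (a ⊗ₜ e) = a ⊗ₜ e)) ↔
    (∃ θ γ : V →ₗ[k] A ⊗[k] V,
      Cros123 k e θ γ ∧ Cros4 k R σ γ (σtw k R σ θ γ) ∧
      R' = Rtw k R θ γ ∧ σ' = σtw k R σ θ γ) := by
  constructor
  · rintro ⟨φ, hmul, hunit⟩
    set θ : V →ₗ[k] A ⊗[k] V := φ.toLinearMap ∘ₗ TensorProduct.mk k A V 1 with hθdef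
    set γ : V →ₗ[k] A ⊗[k] V := φ.symm.toLinearMap ∘ₗ TensorProduct.mk k A V 1 with hγdef
    have hθv : ∀ v : V, θ v = φ ((1 : A) ⊗ₜ v) := fun v => rfl
    have hγv : ∀ v : V, γ v = φ.symm ((1 : A) ⊗ₜ v) := fun v => rfl
    have hφa : ∀ (a : A) (x : A ⊗[k] V), φ (aq a x) = aq a (φ x) := fun a x => by
      rw [← bm_unit_left h' a x, hmul, hunit, bm_unit_left h]
    have hsu : ∀ a : A, φ.symm (a ⊗ₜ e) = a ⊗ₜ e := fun a => by
      conv_lhs => rw [← hunit a]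
      exact φ.symm_apply_apply _
    have hφsa : ∀ (a : A) (x : A ⊗[k] V), φ.symm (aq a x) = aq a (φ.symm x) := by
      intro a x
      apply φ.injective
      rw [φ.apply_symm_apply, hφa, φ.apply_symm_apply]
    have hφtwθ : ∀ x : A ⊗[k] V, φtw k θ x = φ x := by
      intro x
      induction x using TensorProduct.induction_on with
      | zero => simp
      | tmul a v => rw [φtw_tmul, hθv, ← hφa]; simp
      | add x y hx hy => simp [hx, hy]
    have hφtwγ : ∀ x : A ⊗[k] V, φtw k γ x = φ.symm x := by
      intro x
      induction x using TensorProduct.induction_on with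
      | zero => simp
      | tmul a v => rw [φtw_tmul, hγv, ← hφsa]; simp
      | add x y hx hy => simp [hx, hy]
    have hσc : ∀ u w : V, σ' (u ⊗ₜ w) = φ.symm (brzMul k R σ (θ u ⊗ₜ θ w)) := by
      intro u w
      rw [hθv, hθv, ← hmul, bm_sigma h', LinearEquiv.symm_apply_apply]
    have hσ'eq : σ' = σtw k R σ θ γ := by
      refine TensorProduct.ext' fun v w => ?_
      rw [hσc, σtw_tmul, hφtwγ]
    have hR'eq : R' = Rtw k R θ γ := by
      have key : ∀ (v : V) (a : A), R' (v ⊗ₜ a) = φ.symm (rmulL R (θ v ⊗ₜ a)) := by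
        intro v a
        calc R' (v ⊗ₜ a) = brzMul k R' σ' (((1:A) ⊗ₜ v) ⊗ₜ (a ⊗ₜ e)) :=
              (bm_unitR h' v a).symm
        _ = φ.symm (φ (brzMul k R' σ' (((1:A) ⊗ₜ v) ⊗ₜ (a ⊗ₜ e)))) :=
              (φ.symm_apply_apply _).symm
        _ = φ.symm (brzMul k R σ (φ ((1:A) ⊗ₜ v) ⊗ₜ φ (a ⊗ₜ e))) := by rw [hmul]
        _ = φ.symm (rmulL R (θ v ⊗ₜ a)) := by
              rw [hunit, ← hθv, bm_tmul_e h]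
      refine TensorProduct.ext' fun v a => ?_
      rw [key, Rtw_apply]
      generalize θ v = y
      induction y using TensorProduct.induction_on with
      | zero => simp
      | tmul c u => rw [Kγ_tmul, rmulL_tmul, hφsa, hφtwγ]
      | add y₁ y₂ h1 h2 => simp only [add_tmul, map_add, h1, h2]
    refine ⟨θ, γ, ⟨hunit 1, hsu 1, ?_, ?_⟩, ?_, hR'eq, hσ'eq⟩
    · refine LinearMap.ext fun v => ?_
      have : (muls2 k A V ∘ₗ lTensor A γ ∘ₗ θ) v = φtw k γ (θ v) := rfl
      rw [this, hφtwγ, hθv, φ.symm_apply_apply]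
      rfl
    · refine LinearMap.ext fun v => ?_
      have : (muls2 k A V ∘ₗ lTensor A θ ∘ₗ γ) v = φtw k θ (γ v) := rfl
      rw [this, hφtwθ, hγv, φ.apply_symm_apply]
      rfl
    · -- Cros4
      rw [← hσ'eq]
      have claim3 : ∀ (c : A) (z : A ⊗[k] V) (w₀ : V),
          muls2 k A V (TensorProduct.map (mul' k A) σ'
            ((TensorProduct.assoc k (A ⊗[k] A) V V)
              ((rTensor V (TensorProduct.assoc k A A V).symm.toLinearMap)
                ((c ⊗ₜ z) ⊗ₜ w₀))))
          = φ.symm (brzMul k R σ (aq c (φ z) ⊗ₜ θ w₀)) := by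
        intro c z w₀
        induction z using TensorProduct.induction_on with
        | zero => simp
        | tmul d u' =>
          rw [rTensor_tmul]
          simp only [LinearEquiv.coe_coe, TensorProduct.assoc_symm_tmul,
            TensorProduct.assoc_tmul, TensorProduct.map_tmul, mul'_apply, muls2_eq_aq]
          rw [hσc, ← hφsa, ← bm_aq_left, ← hφtwθ, φtw_tmul, aq_aq]
        | add z₁ z₂ h1 h2 =>
          simp only [tmul_add, add_tmul, map_add, h1, h2]
      have claim2 : ∀ (m : A ⊗[k] V) (w₀ : V),
          muls2 k A V (TensorProduct.map (mul' k A) σ'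
            ((TensorProduct.assoc k (A ⊗[k] A) V V)
              ((rTensor V (TensorProduct.assoc k A A V).symm.toLinearMap)
                ((rTensor V (lTensor A γ)) (m ⊗ₜ w₀)))))
          = φ.symm (brzMul k R σ (m ⊗ₜ θ w₀)) := by
        intro m w₀
        induction m using TensorProduct.induction_on with
        | zero => simp
        | tmul c u =>
          rw [rTensor_tmul, lTensor_tmul, claim3, hγv, φ.apply_symm_apply]
          simp
        | add m₁ m₂ h1 h2 =>
          simp only [add_tmul, map_add, h1, h2]
      have claim1 : ∀ (v : V) (y : A ⊗[k] V),
          muls2 k A V (TensorProduct.map (mul' k A) σ'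
            ((TensorProduct.assoc k (A ⊗[k] A) V V)
              ((rTensor V (TensorProduct.assoc k A A V).symm.toLinearMap)
                ((rTensor V (lTensor A γ))
                  ((rTensor V R) ((TensorProduct.assoc k V A V).symm (v ⊗ₜ y)))))))
          = φ.symm (tR R σ (v ⊗ₜ φ y)) := by
        intro v y
        induction y using TensorProduct.induction_on with
        | zero => simp
        | tmul b w₀ =>
          rw [TensorProduct.assoc_symm_tmul, rTensor_tmul, claim2, ← lemD h,
            ← hφtwθ, φtw_tmul]
        | add y₁ y₂ h1 h2 =>
          simp only [tmul_add, map_add, h1, h2]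
      unfold Cros4
      refine TensorProduct.ext' fun v w => ?_
      simp only [coe_comp, Function.comp_apply, lTensor_tmul, LinearEquiv.coe_coe]
      rw [claim1, hγv, φ.apply_symm_apply, tR_tmul, h.unit_R_right, tsL_tmul,
        aq_one, ← hφtwγ]
      rfl
  · rintro ⟨θ, γ, ⟨hθe, hγe, hc3, hc4⟩, hcros4, hR', hσ'⟩
    have hgθ : ∀ v : V, φtw k θ (γ v) = (1 : A) ⊗ₜ v := fun v => by
      have := LinearMap.congr_fun hc4 v
      simpa [φtw] using this
    have hgγ : ∀ v : V, φtw k γ (θ v) = (1 : A) ⊗ₜ v := fun v => by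
      have := LinearMap.congr_fun hc3 v
      simpa [φtw] using this
    have φleft : ∀ x : A ⊗[k] V, φtw k θ (φtw k γ x) = x := by
      intro x
      induction x using TensorProduct.induction_on with
      | zero => simp
      | tmul a v => rw [φtw_tmul, φtw_aq, hgθ]; simp
      | add x y hx hy => simp [hx, hy]
    have φright : ∀ x : A ⊗[k] V, φtw k γ (φtw k θ x) = x := by
      intro x
      induction x using TensorProduct.induction_on with
      | zero => simp
      | tmul a v => rw [φtw_tmul, φtw_aq, hgγ]; simp
      | add x y hx hy => simp [hx, hy]
    refine ⟨LinearEquiv.ofLinear (φtw k θ) (φtw k γ)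
      (LinearMap.ext φleft) (LinearMap.ext φright), ?_, ?_⟩
    · intro x y
      simp only [LinearEquiv.ofLinear_apply]
      have key1 : ∀ u w : V, φtw k θ (σ' (u ⊗ₜ w)) = brzMul k R σ (θ u ⊗ₜ θ w) := by
        intro u w
        rw [hσ', σtw_tmul, φleft]
      have key2 : ∀ (v : V) (b : A), φtw k θ (R' (v ⊗ₜ b)) = rmulL R (θ v ⊗ₜ b) := by
        intro v b
        rw [hR', Rtw_apply]
        generalize θ v = y
        induction y using TensorProduct.induction_on with
        | zero => simp
        | tmul c u => rw [Kγ_tmul, φtw_aq, φleft, rmulL_tmul]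
        | add y₁ y₂ h1 h2 => simp only [add_tmul, map_add, h1, h2]
      have key3 : ∀ (z : A ⊗[k] V) (w : V),
          φtw k θ (tsL σ' (z ⊗ₜ w)) = brzMul k R σ (φtw k θ z ⊗ₜ θ w) := by
        intro z w
        induction z using TensorProduct.induction_on with
        | zero => simp
        | tmul d u => rw [tsL_tmul, φtw_aq, key1, ← bm_aq_left, φtw_tmul]
        | add z₁ z₂ h1 h2 => simp only [add_tmul, map_add, h1, h2]
      have key4 : ∀ (y : A ⊗[k] V) (b : A) (t : A ⊗[k] V),
          brzMul k R σ (rmulL R (y ⊗ₜ b) ⊗ₜ t) = brzMul k R σ (y ⊗ₜ aq b t) := by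
        intro y b t
        rw [← bm_tmul_e h, brz_assoc h, bm_unit_left h]
      induction x using TensorProduct.induction_on with
      | zero => simp
      | add x₁ x₂ h1 h2 => simp only [add_tmul, map_add, h1, h2]
      | tmul a v =>
        induction y using TensorProduct.induction_on with
        | zero => simp
        | add y₁ y₂ h1 h2 => simp only [tmul_add, map_add, h1, h2]
        | tmul b w =>
          rw [bm_tmul, φtw_aq, tR_tmul, key3, key2, key4, φtw_tmul, φtw_tmul,
            bm_aq_left]
    · intro a
      simp only [LinearEquiv.ofLinear_apply, φtw_tmul, hθe, aq_tmul, mul_one]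
end
end
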